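/- arXiv:1004.2483 — 5 statements merged into one kernel-verified Lean document; each statement's English description precedes it below -/
import Mathlib

section
/- Let F be a field of characteristic not 2, let a, b ∈ F* and let t ∈ F* be a sum of squares in F. If the quadratic form ⟨1, a, b, -ab⟩ is not weakly isotropic over F (i.e., no multiple n × ⟨1,a,b,-ab⟩ is isotropic), then ⟨1, a, b, -ab⟩ remains not weakly isotropic over F(√t). -/
open scoped BigOperators ENat Classical

namespace QF

variable {F : Type*} [Field F]

/-- Value of the diagonal quadratic form with coefficients `d` at the vector `v`. -/
def qval {ι : Type*} [Fintype ι] (d : ι → F) (v : ι → F) : F :=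
  ∑ i, d i * v i ^ 2

/-- A (diagonal) quadratic form is isotropic if it has a nontrivial zero. -/
def Isotropic {ι : Type*} [Fintype ι] (d : ι → F) : Prop :=
  ∃ v : ι → F, v ≠ 0 ∧ qval d v = 0

def Anisotropic {ι : Type*} [Fintype ι] (d : ι → F) : Prop :=
  ¬ Isotropic d

/-- Orthogonal sum of `n` copies of the form `d`. -/
def copies (n : ℕ) {ι : Type*} (d : ι → F) : Fin n × ι → F :=
  fun p => d p.2

/-- Orthogonal sum of two diagonal forms. -/
def sumForm {ι κ : Type*} (d : ι → F) (e : κ → F) : ι ⊕ κ → F :=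
  Sum.elim d e

/-- A form is weakly isotropic if some multiple `n × q`, `n ≥ 1`, is isotropic. -/
def WeaklyIsotropic {ι : Type*} [Fintype ι] (d : ι → F) : Prop :=
  ∃ n : ℕ, 1 ≤ n ∧ Isotropic (copies n d)

/-- Isometry of diagonal quadratic forms. -/
def Isometric {ι κ : Type*} [Fintype ι] [Fintype κ] (d : ι → F) (e : κ → F) : Prop :=
  ∃ f : (ι → F) ≃ₗ[F] (κ → F), ∀ v, qval e (f v) = qval d v

/-- The hyperbolic form of dimension `2m`, i.e. `m × ⟨1,-1⟩`. -/
def hypForm (F : Type*) [Field F] (m : ℕ) : Fin m ⊕ Fin m → F :=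
  Sum.elim (fun _ => (1 : F)) (fun _ => (-1 : F))

def Hyperbolic {ι : Type*} [Fintype ι] (d : ι → F) : Prop :=
  ∃ m : ℕ, Isometric d (hypForm F m)

/-- A form is torsion if some multiple `n × q`, `n ≥ 1`, is hyperbolic. -/
def Torsion {ι : Type*} [Fintype ι] (d : ι → F) : Prop :=
  ∃ n : ℕ, 1 ≤ n ∧ Hyperbolic (copies n d)

/-- `e` is a subform of `d` : `d ≅ e ⊥ τ` for some form `τ`. -/
def IsSubform {ι κ : Type*} [Fintype ι] [Fintype κ] (e : κ → F) (d : ι → F) : Prop :=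
  ∃ (m : ℕ) (τ : Fin m → F), Isometric d (sumForm e τ)

/-- `e` is similar to a subform of `d`. -/
def SimSubform {ι κ : Type*} [Fintype ι] [Fintype κ] (e : κ → F) (d : ι → F) : Prop :=
  ∃ c : F, c ≠ 0 ∧ IsSubform (fun i => c * e i) d

/-- The `ℓ`-fold Pfister form `⟨⟨a₁,…,a_ℓ⟩⟩ = ⊗ᵢ ⟨1, aᵢ⟩`, with coefficient
`∏ i ∈ S, a i` at the index `S : Finset (Fin ℓ)`. -/
def pfister {ℓ : ℕ} (a : Fin ℓ → F) : Finset (Fin ℓ) → F :=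
  fun S => ∏ i ∈ S, a i

/-- `d` is a Pfister neighbor of the `ℓ`-fold Pfister form `⟨⟨a⟩⟩`. -/
def IsPfisterNeighbor {ι : Type*} [Fintype ι] {ℓ : ℕ} (d : ι → F) (a : Fin ℓ → F) : Prop :=
  2 ^ ℓ < 2 * Fintype.card ι ∧ SimSubform d (pfister a)

/-- Witt equivalence of diagonal forms. -/
def WittEquiv {ι κ : Type*} [Fintype ι] [Fintype κ] (d : ι → F) (e : κ → F) : Prop :=
  ∃ m k : ℕ, Isometric (sumForm d (hypForm F m)) (sumForm e (hypForm F k))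

/-- An ordering of the field `F`, given by its positive cone. -/
structure FieldOrdering (F : Type*) [Field F] where
  P : Set F
  add_mem : ∀ x y : F, x ∈ P → y ∈ P → x + y ∈ P
  mul_mem : ∀ x y : F, x ∈ P → y ∈ P → x * y ∈ P
  total : ∀ x : F, x ∈ P ∨ -x ∈ P
  neg_one_notMem : (-1 : F) ∉ P

/-- The signature of a (nondegenerate diagonal) form at an ordering. -/
noncomputable def sgn {ι : Type*} [Fintype ι] (P : FieldOrdering F) (d : ι → F) : ℤ :=
  ∑ i, if d i ∈ P.P then 1 else -1

/-- The Harrison set `H(a) = {P : a >_P 0}`. -/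
def Harrison (F : Type*) [Field F] (a : F) : Set (FieldOrdering F) :=
  {P | a ∈ P.P ∧ -a ∉ P.P}

/-- The Harrison topology on the space of orderings. -/
instance orderingTopology (F : Type*) [Field F] : TopologicalSpace (FieldOrdering F) :=
  .generateFrom {s | ∃ a : F, a ≠ 0 ∧ s = Harrison F a}

/-- `F` satisfies SAP: every clopen subset of the space of orderings is a Harrison set. -/
def IsSAP (F : Type*) [Field F] : Prop :=
  ∀ s : Set (FieldOrdering F), IsClopen s → ∃ a : F, a ≠ 0 ∧ s = Harrison F a

/-- Totally indefinite: indefinite at every ordering of `F`. -/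
def TotallyIndefinite {ι : Type*} [Fintype ι] (d : ι → F) : Prop :=
  ∀ P : FieldOrdering F, (sgn P d).natAbs < Fintype.card ι

/-- The `u`-invariant: supremum of dimensions of anisotropic torsion forms. -/
noncomputable def uInv (F : Type*) [Field F] : ℕ∞ :=
  sSup {n : ℕ∞ | ∃ (m : ℕ) (d : Fin m → F), Anisotropic d ∧ Torsion d ∧ n = m}

/-- The Hasse number `ũ`: supremum of dimensions of anisotropic totally indefinite forms. -/
noncomputable def hasseNumber (F : Type*) [Field F] : ℕ∞ :=
  sSup {n : ℕ∞ | ∃ (m : ℕ) (d : Fin m → F), (∀ i, d i ≠ 0) ∧ Anisotropic d ∧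
    TotallyIndefinite d ∧ n = m}

/-- `x` is a sum of `m` squares. -/
def IsSumSqOf (m : ℕ) (x : F) : Prop :=
  ∃ f : Fin m → F, x = ∑ i, f i ^ 2

/-- The Pythagoras number of `F`. -/
noncomputable def pythNumber (F : Type*) [Field F] : ℕ∞ :=
  sInf {p : ℕ∞ | ∃ m : ℕ, p = m ∧ ∀ x : F, IsSumSq x → IsSumSqOf m x}

/-- Property `S₁`: for every torsion binary form `β` there is `n ≥ 1` with
`(n × ⟨1⟩) ⊥ β` isotropic. -/
def HasS1 (F : Type*) [Field F] : Prop :=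
  ∀ β : Fin 2 → F, (∀ i, β i ≠ 0) → Torsion β →
    ∃ n : ℕ, 1 ≤ n ∧ Isotropic (sumForm (fun _ : Fin n => (1 : F)) β)

/-- The Pythagorean closure of `F` inside an algebraic closure: the smallest
subfield containing `F` in which every sum of two squares is a square. -/
noncomputable def pythClosure (F : Type*) [Field F] : Subfield (AlgebraicClosure F) :=
  sInf {K | Set.range (algebraMap F (AlgebraicClosure F)) ⊆ K ∧
    ∀ x ∈ K, ∀ y ∈ K, ∃ z ∈ K, z ^ 2 = x ^ 2 + y ^ 2}

/-- The form `d` over `F` becomes isotropic over the Pythagorean closure of `F`. -/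
def IsotropicOverPyth {ι : Type*} [Fintype ι] (d : ι → F) : Prop :=
  ∃ v : ι → AlgebraicClosure F, (∀ i, v i ∈ pythClosure F) ∧ v ≠ 0 ∧
    ∑ i, algebraMap F (AlgebraicClosure F) (d i) * v i ^ 2 = 0

end QF

namespace QFaux

variable {F : Type*} [Field F]

lemma sumsq_rep {t : F} (ht : IsSumSq t) :
    ∃ (m : ℕ) (c : Fin m → F), t = ∑ i, c i ^ 2 := by
  induction ht with
  | zero => exact ⟨0, ![], by simp⟩
  | sq_add a hS ih =>
    obtain ⟨m, c, hc⟩ := ih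
    refine ⟨m + 1, Fin.cons a c, ?_⟩
    rw [Fin.sum_univ_succ]
    simp [hc, sq]

lemma decomp {K : Type*} [Field K] [Algebra F K] {s : K} {t : F}
    (hs : s ^ 2 = algebraMap F K t) (hgen : Algebra.adjoin F {s} = ⊤) (w : K) :
    ∃ u v : F, w = algebraMap F K u + algebraMap F K v * s := by
  have hw : w ∈ Algebra.adjoin F {s} := hgen ▸ Algebra.mem_top
  induction hw using Algebra.adjoin_induction with
  | mem x hx =>
    rcases hx with rfl
    exact ⟨0, 1, by simp⟩
  | algebraMap r => exact ⟨r, 0, by simp⟩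
  | add x y hx hy ihx ihy =>
    obtain ⟨u1, v1, h1⟩ := ihx
    obtain ⟨u2, v2, h2⟩ := ihy
    exact ⟨u1 + u2, v1 + v2, by rw [h1, h2]; simp only [map_add]; ring⟩
  | mul x y hx hy ihx ihy =>
    obtain ⟨u1, v1, h1⟩ := ihx
    obtain ⟨u2, v2, h2⟩ := ihy
    refine ⟨u1 * u2 + v1 * v2 * t, u1 * v2 + v1 * u2, ?_⟩
    rw [h1, h2]
    simp only [map_add, map_mul]
    rw [← hs]
    ring

lemma descent {K : Type*} [Field K] [Algebra F K] {s : K} {t : F}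
    (hs : s ^ 2 = algebraMap F K t) (hgen : Algebra.adjoin F {s} = ⊤)
    {ι : Type*} [Fintype ι] (e : ι → F) (V : ι → K) (hV : V ≠ 0)
    (hq : ∑ i, algebraMap F K (e i) * V i ^ 2 = 0) :
    ∃ x y : ι → F, ¬(x = 0 ∧ y = 0) ∧
      (∑ i, e i * x i ^ 2) + t * (∑ i, e i * y i ^ 2) = 0 := by
  set A := algebraMap F K with hA
  have hinj : Function.Injective A := (algebraMap F K).injective
  by_cases hsur : ∃ u : F, A u = s
  · -- s ∈ F : algebraMap is surjective
    obtain ⟨u, hu⟩ := hsur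
    have hbot : ∀ w : K, ∃ p : F, A p = w := by
      intro w
      obtain ⟨p, q, hpq⟩ := decomp hs hgen w
      exact ⟨p + q * u, by rw [hpq, ← hu]; simp only [map_add, map_mul]; rfl⟩
    choose x hx using fun i => hbot (V i)
    refine ⟨x, 0, ?_, ?_⟩
    · rintro ⟨hx0, -⟩
      apply hV
      funext i
      have := hx i
      rw [hx0] at this
      simpa using this.symm
    · simp only [Pi.zero_apply]
      have : A (∑ i, e i * x i ^ 2) = A 0 := by
        rw [map_zero, map_sum, ← hq]
        exact Finset.sum_congr rfl fun i _ => by rw [← hx i]; simp [map_mul, map_pow]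
      have h0 := hinj this
      simp [h0]
  · -- 1, s linearly independent
    have hindep : ∀ p q : F, A p + A q * s = 0 → p = 0 ∧ q = 0 := by
      intro p q hpq
      by_cases hq0 : q = 0
      · subst hq0
        simp only [map_zero, zero_mul, add_zero] at hpq
        exact ⟨hinj (by rw [hpq, map_zero]), rfl⟩
      · exfalso
        apply hsur
        refine ⟨-p / q, ?_⟩
        have hAq : A q ≠ 0 := fun h => hq0 (hinj (by rw [h, map_zero]))
        rw [map_div₀, map_neg, div_eq_iff hAq]
        linear_combination -hpq
    choose x y hxy using fun i => decomp hs hgen (V i)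
    have key : ∀ p q : F, (A p + A q * s) ^ 2 = A (p ^ 2 + t * q ^ 2) + A (2 * p * q) * s := by
      intro p q
      have h1 : (A p + A q * s) ^ 2 = A p ^ 2 + A q ^ 2 * s ^ 2 + (2 * A p * A q) * s := by
        ring
      rw [h1, hs]
      simp only [map_add, map_mul, map_pow, map_ofNat]
      ring
    have hsum : A (∑ i, e i * (x i ^ 2 + t * y i ^ 2))
        + A (∑ i, e i * (2 * x i * y i)) * s = 0 := by
      rw [← hq]
      rw [map_sum, map_sum, Finset.sum_mul, ← Finset.sum_add_distrib]
      refine (Finset.sum_congr rfl fun i _ => ?_).symm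
      rw [hxy i, key (x i) (y i)]
      simp only [map_mul]
      ring
    obtain ⟨h1, -⟩ := hindep _ _ hsum
    refine ⟨x, y, ?_, ?_⟩
    · rintro ⟨hx0, hy0⟩
      apply hV
      funext i
      rw [hxy i, hx0, hy0]
      simp
    · rw [← h1, Finset.mul_sum, ← Finset.sum_add_distrib]
      exact Finset.sum_congr rfl fun i _ => by ring

end QFaux

/-- If `⟨1,a,b,-ab⟩` is not weakly isotropic over `F`, it remains not
weakly isotropic over `F(√t)` for `t` a nonzero sum of squares, where `F(√t)` is any
field extension of `F` generated by a square root of `t`. -/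
theorem stmt0 (F : Type*) [Field F] (hchar : (2 : F) ≠ 0)
    (a b t : F) (ha : a ≠ 0) (hb : b ≠ 0) (ht0 : t ≠ 0) (ht : IsSumSq t)
    (hniso : ¬ QF.WeaklyIsotropic ![1, a, b, -(a * b)])
    (K : Type*) [Field K] [Algebra F K] (s : K)
    (hs : s ^ 2 = algebraMap F K t) (hgen : Algebra.adjoin F {s} = ⊤) :
    ¬ QF.WeaklyIsotropic (fun i => algebraMap F K (![1, a, b, -(a * b)] i)) := by
  rintro ⟨n, hn, V, hV0, hVq⟩
  set d : Fin 4 → F := ![1, a, b, -(a * b)] with hd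
  have hVq' : ∑ p : Fin n × Fin 4, algebraMap F K (QF.copies n d p) * V p ^ 2 = 0 := hVq
  obtain ⟨x, y, hne, hsum⟩ := QFaux.descent hs hgen (QF.copies n d) V hV0 hVq'
  by_cases hx : x = 0
  · have hy : y ≠ 0 := fun h => hne ⟨hx, h⟩
    rw [hx] at hsum
    simp only [Pi.zero_apply, ne_eq, OfNat.ofNat_ne_zero, not_false_eq_true, zero_pow,
      mul_zero, Finset.sum_const_zero, zero_add] at hsum
    have hqy : ∑ p, QF.copies n d p * y p ^ 2 = 0 := by
      rcases mul_eq_zero.mp hsum with h | h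
      · exact absurd h ht0
      · exact h
    exact hniso ⟨n, hn, y, hy, hqy⟩
  · obtain ⟨m, c, hc⟩ := QFaux.sumsq_rep ht
    set N := (m + 1) * n with hN'
    have hN : 1 ≤ N := Nat.mul_pos (Nat.succ_pos m) hn
    set σ : Fin (m + 1) × (Fin n × Fin 4) ≃ Fin N × Fin 4 :=
      (Equiv.prodAssoc _ _ _).symm.trans
        (Equiv.prodCongr finProdFinEquiv (Equiv.refl (Fin 4))) with hσ
    set W : Fin (m + 1) × (Fin n × Fin 4) → F :=
      fun p => Fin.cases (x p.2) (fun j => c j * y p.2) p.1 with hW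
    refine hniso ⟨N, hN, fun q => W (σ.symm q), ?_, ?_⟩
    · intro h0
      obtain ⟨i0, hi0⟩ := Function.ne_iff.mp hx
      have h1 : W (σ.symm (σ (0, i0))) = 0 := congrFun h0 (σ (0, i0))
      rw [Equiv.symm_apply_apply] at h1
      rw [hW] at h1
      simp only [Fin.cases_zero] at h1
      exact hi0 (by simpa using h1)
    · show ∑ q : Fin N × Fin 4, QF.copies N d q * W (σ.symm q) ^ 2 = 0
      rw [← Equiv.sum_comp σ (fun q => QF.copies N d q * W (σ.symm q) ^ 2)]
      simp only [Equiv.symm_apply_apply]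
      have h1 : ∀ p : Fin (m + 1) × (Fin n × Fin 4),
          QF.copies N d (σ p) * W p ^ 2 = QF.copies n d p.2 * W p ^ 2 := fun p => rfl
      calc ∑ p, QF.copies N d (σ p) * W p ^ 2
          = ∑ p, QF.copies n d p.2 * W p ^ 2 := Finset.sum_congr rfl fun p _ => h1 p
        _ = (∑ i, QF.copies n d i * x i ^ 2)
            + t * (∑ i, QF.copies n d i * y i ^ 2) := by
            rw [Fintype.sum_prod_type, Fin.sum_univ_succ]
            have hA : ∀ i : Fin n × Fin 4, W ((0 : Fin (m + 1)), i) = x i := fun i => by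
              rw [hW]; simp
            have hB : ∀ (j : Fin m) (i : Fin n × Fin 4), W (j.succ, i) = c j * y i :=
              fun j i => by rw [hW]; simp
            simp only [hA, hB]
            have h2 : (∑ j : Fin m, ∑ i, QF.copies n d i * (c j * y i) ^ 2)
                = ∑ j : Fin m, c j ^ 2 * ∑ i, QF.copies n d i * y i ^ 2 := by
              refine Finset.sum_congr rfl fun j _ => ?_
              rw [Finset.mul_sum]
              exact Finset.sum_congr rfl fun i _ => by ring
            rw [h2, hc, Finset.sum_mul]
        _ = 0 := hsum
end

section
/- Let F be a field of characteristic not 2 and q a quadratic form over F such that n × q is isotropic for some n ≥ 1, and m × ⟨1,-t⟩ is isotropic for some m ≥ 1 where ⟨1,-t⟩ is similar to a subform of n × q. Then mn × q is isotropic; in particular, if a binary form ⟨1,-t⟩ with t a totally positive element is represented by a multiple of q, then q is weakly isotropic. -/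
open scoped BigOperators ENat Classical

namespace QF

variable {F : Type*} [Field F]

-- auxiliary lemmas


lemma qval_copies {m : ℕ} {ι : Type*} [Fintype ι] (e : ι → F) (u : Fin m × ι → F) :
    qval (copies m e) u = ∑ i, qval e (fun j => u (i, j)) := by
  simp [qval, copies, Fintype.sum_prod_type]

lemma qval_sumForm {ι κ : Type*} [Fintype ι] [Fintype κ] (e : ι → F) (τ : κ → F)
    (v : ι ⊕ κ → F) :
    qval (sumForm e τ) v = qval e (fun i => v (Sum.inl i)) + qval τ (fun j => v (Sum.inr j)) := by
  simp [qval, sumForm, Fintype.sum_sum_type]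

lemma iso_reindex {ι κ : Type*} [Fintype ι] [Fintype κ] (d : ι → F) (e : κ → F)
    (σ : κ ≃ ι) (h : ∀ k, e k = d (σ k)) : Isotropic d → Isotropic e := by
  rintro ⟨v, hv, hq⟩
  refine ⟨v ∘ σ, ?_, ?_⟩
  · intro h0
    apply hv
    funext i
    have := congrFun h0 (σ.symm i)
    simpa using this
  · rw [← hq]
    unfold qval
    rw [← Equiv.sum_comp σ (fun i => d i * v i ^ 2)]
    exact Finset.sum_congr rfl fun k _ => by rw [h]; rfl

lemma iso_of_isometric {ι κ : Type*} [Fintype ι] [Fintype κ] {d : ι → F} {e : κ → F}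
    (h : Isometric d e) : Isotropic e → Isotropic d := by
  obtain ⟨f, hf⟩ := h
  rintro ⟨w, hw, hq⟩
  refine ⟨f.symm w, ?_, ?_⟩
  · intro h0
    apply hw
    have := congrArg f h0
    simpa using this
  · have := hf (f.symm w)
    rw [f.apply_symm_apply] at this
    rw [← this, hq]

lemma copies_isotropic {m : ℕ} (hm : 1 ≤ m) {ι : Type*} [Fintype ι] {e : ι → F} :
    Isotropic e → Isotropic (copies m e) := by
  rintro ⟨v, hv, hq⟩
  refine ⟨fun p => if p.1 = ⟨0, hm⟩ then v p.2 else 0, ?_, ?_⟩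
  · intro h0'
    apply hv
    funext j
    have := congrFun h0' (⟨0, hm⟩, j)
    simpa using this
  · rw [qval_copies]
    have : ∀ i : Fin m, qval e (fun j => if i = ⟨0, hm⟩ then v j else 0)
        = if i = ⟨0, hm⟩ then qval e v else 0 := by
      intro i
      by_cases hi : i = ⟨0, hm⟩ <;> simp [hi, qval]
    simp only [this]
    simp [hq]


lemma qval_scale {ι : Type*} [Fintype ι] (c : F) (e : ι → F) (v : ι → F) :
    qval (fun i => c * e i) v = c * qval e v := by
  simp [qval, Finset.mul_sum, mul_assoc]

lemma key {ι κ : Type*} [Fintype ι] [Fintype κ] {d : ι → F} {β : κ → F} {n m : ℕ}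
    (h : SimSubform β (copies n d)) (hiso : Isotropic (copies m β)) :
    Isotropic (copies m (copies n d)) := by
  obtain ⟨c, hc, k, τ, f, hf⟩ := h
  obtain ⟨w, hw, hq⟩ := hiso
  set u : Fin m → (κ ⊕ Fin k) → F :=
    fun i => Sum.elim (fun j => w (i, j)) (fun _ => 0) with hu
  refine ⟨fun p => f.symm (u p.1) p.2, ?_, ?_⟩
  · intro h0
    apply hw
    funext p
    have hui : f.symm (u p.1) = 0 := funext fun s => congrFun h0 (p.1, s)
    have : u p.1 = 0 := by
      have := congrArg f hui
      simpa using this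
    have := congrFun this (Sum.inl p.2)
    simpa [hu] using this
  · rw [qval_copies]
    have step : ∀ i : Fin m, qval (copies n d) (f.symm (u i)) = c * qval β (fun j => w (i, j)) := by
      intro i
      have h1 := hf (f.symm (u i))
      rw [f.apply_symm_apply] at h1
      rw [← h1, qval_sumForm]
      have h2 : qval τ (fun j => u i (Sum.inr j)) = 0 := by simp [qval, hu]
      have h3 : qval (fun j => c * β j) (fun j => u i (Sum.inl j))
          = c * qval β (fun j => w (i, j)) := by
        rw [qval_scale]; rfl
      rw [h2, h3, add_zero]
    calc (∑ i, qval (copies n d) fun j => f.symm (u i) j)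
        = ∑ i, c * qval β (fun j => w (i, j)) := Finset.sum_congr rfl fun i _ => step i
      _ = c * ∑ i, qval β (fun j => w (i, j)) := by rw [Finset.mul_sum]
      _ = c * qval (copies m β) w := by rw [qval_copies]
      _ = 0 := by rw [hq, mul_zero]

lemma copies_copies {ι : Type*} [Fintype ι] (d : ι → F) (n m : ℕ) :
    Isotropic (copies m (copies n d)) → Isotropic (copies (m * n) d) := by
  refine iso_reindex _ _ ((finProdFinEquiv.symm.prodCongr (Equiv.refl ι)).trans
    (Equiv.prodAssoc _ _ _)) fun p => rfl

lemma sumsq_rep {t : F} (h : IsSumSq t) : ∃ (k : ℕ) (f : Fin k → F), t = ∑ i, f i ^ 2 := by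
  induction h with
  | zero => exact ⟨0, ![], by simp⟩
  | sq_add a pS ih =>
      obtain ⟨k, f, hf⟩ := ih
      exact ⟨k + 1, Fin.cons a f, by subst hf; simp [Fin.sum_univ_succ, sq]⟩

lemma binary_iso {t : F} (ht : t ≠ 0) (h : IsSumSq t) :
    ∃ m : ℕ, 1 ≤ m ∧ Isotropic (copies m ![1, -t]) := by
  obtain ⟨k, f, hf⟩ := sumsq_rep h
  have hk : 1 ≤ k := by
    rcases Nat.eq_zero_or_pos k with h0 | h0
    · subst h0; simp at hf; exact absurd hf ht
    · exact h0
  refine ⟨k, hk, fun p => if p.2 = 0 then f p.1 else (if p.1 = ⟨0, hk⟩ then 1 else 0), ?_, ?_⟩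
  · intro h0
    have := congrFun h0 (⟨0, hk⟩, 1)
    simp at this
  · rw [qval_copies]
    have : ∀ i : Fin k, qval ![1, -t]
        (fun j => if j = 0 then f i else (if i = ⟨0, hk⟩ then 1 else 0))
        = f i ^ 2 + (-t) * (if i = ⟨0, hk⟩ then 1 else 0) ^ 2 := by
      intro i
      simp [qval, Fin.sum_univ_two]
    simp only [this]
    rw [Finset.sum_add_distrib]
    have h1 : ∑ i : Fin k, (-t) * (if i = ⟨0, hk⟩ then 1 else 0) ^ 2 = -t := by
      rw [Finset.sum_eq_single ⟨0, hk⟩] <;> simp +contextual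
    rw [h1, ← hf]
    ring


end QF

/-- If `n × q` is isotropic (`n ≥ 1`), `m × ⟨1,-t⟩` is isotropic (`m ≥ 1`),
and `⟨1,-t⟩` is similar to a subform of `n × q`, then `mn × q` is isotropic.
In particular, if `⟨1,-t⟩` with `t` totally positive is similar to a subform of some
multiple of `q`, then `q` is weakly isotropic. -/
theorem stmt2 (F : Type*) [Field F] (hchar : (2 : F) ≠ 0)
    {ι : Type*} [Fintype ι] (d : ι → F) :
    (∀ (n m : ℕ) (t : F), 1 ≤ n → 1 ≤ m →
      QF.Isotropic (QF.copies n d) →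
      QF.Isotropic (QF.copies m ![1, -t]) →
      QF.SimSubform ![1, -t] (QF.copies n d) →
      QF.Isotropic (QF.copies (m * n) d)) ∧
    (∀ t : F, IsSumSq t → t ≠ 0 →
      (∃ n : ℕ, 1 ≤ n ∧ QF.SimSubform ![1, -t] (QF.copies n d)) →
      QF.WeaklyIsotropic d) := by
  constructor
  · intro n m t hn hm hiso _ _
    exact QF.copies_copies d n m (QF.copies_isotropic hm hiso)
  · intro t hsq ht ⟨n, hn, hsub⟩
    obtain ⟨m, hm, hbin⟩ := QF.binary_iso ht hsq
    refine ⟨m * n, Nat.one_le_iff_ne_zero.2 (by positivity), ?_⟩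
    exact QF.copies_copies d n m (QF.key hsub hbin)
end

section
/- Let F be a field of characteristic not 2. F satisfies SAP if and only if for all a, b ∈ F* the quadratic form ⟨1, a, b, -ab⟩ is weakly isotropic. -/
open scoped BigOperators ENat Classical

section Aux

open QF

variable {F : Type*} [Field F]

/-- Sums of squares. -/
def SS (x : F) : Prop := ∃ (n : ℕ) (f : Fin n → F), x = ∑ i, f i ^ 2

lemma SS.zero : SS (0 : F) := ⟨0, ![], by simp⟩

lemma SS.sq (x : F) : SS (x ^ 2) := ⟨1, ![x], by simp⟩

lemma SS.one : SS (1 : F) := by simpa using SS.sq (1 : F)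

lemma SS_of_sum {ι : Type*} [Fintype ι] (f : ι → F) : SS (∑ i, f i ^ 2) := by
  classical
  let e := Fintype.equivFin ι
  exact ⟨_, f ∘ e.symm, (Equiv.sum_comp e.symm (fun i => f i ^ 2)).symm⟩

lemma SS_of_sum_finset {ι : Type*} (s : Finset ι) (f : ι → F) :
    SS (∑ i ∈ s, f i ^ 2) := by
  classical
  rw [← Finset.sum_coe_sort s (fun i => f i ^ 2)]
  exact SS_of_sum _

lemma SS.add {x y : F} (hx : SS x) (hy : SS y) : SS (x + y) := by
  obtain ⟨n, f, rfl⟩ := hx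
  obtain ⟨m, g, rfl⟩ := hy
  have : (∑ i, f i ^ 2) + (∑ i, g i ^ 2) = ∑ i : Fin n ⊕ Fin m, (Sum.elim f g i) ^ 2 := by
    rw [Fintype.sum_sum_type]; simp
  rw [this]; exact SS_of_sum _

lemma SS.mul {x y : F} (hx : SS x) (hy : SS y) : SS (x * y) := by
  obtain ⟨n, f, rfl⟩ := hx
  obtain ⟨m, g, rfl⟩ := hy
  have : (∑ i, f i ^ 2) * (∑ i, g i ^ 2) = ∑ p : Fin n × Fin m, (f p.1 * g p.2) ^ 2 := by
    rw [Fintype.sum_prod_type, Finset.sum_mul_sum]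
    simp [mul_pow]
  rw [this]; exact SS_of_sum _

lemma QF.FieldOrdering.sqMem (P : FieldOrdering F) (x : F) : x ^ 2 ∈ P.P := by
  rcases P.total x with h | h
  · simpa [pow_two] using P.mul_mem x x h h
  · have := P.mul_mem _ _ h h
    simpa [pow_two] using this

lemma QF.FieldOrdering.zeroMem (P : FieldOrdering F) : (0 : F) ∈ P.P := by
  simpa using P.sqMem 0

lemma QF.FieldOrdering.oneMem (P : FieldOrdering F) : (1 : F) ∈ P.P := by
  simpa using P.sqMem 1

lemma QF.FieldOrdering.ssMem (P : FieldOrdering F) {x : F} (h : SS x) : x ∈ P.P := by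
  obtain ⟨n, f, rfl⟩ := h
  refine Finset.sum_induction _ (· ∈ P.P) (fun a b ha hb => P.add_mem a b ha hb)
    P.zeroMem (fun i _ => P.sqMem (f i))

lemma QF.FieldOrdering.eqZero (P : FieldOrdering F) {x : F} (h1 : x ∈ P.P) (h2 : -x ∈ P.P) :
    x = 0 := by
  by_contra hx
  have hinv : (x⁻¹ : F) ∈ P.P := by
    have := P.mul_mem _ _ h1 (P.sqMem x⁻¹)
    rwa [show x * x⁻¹ ^ 2 = x⁻¹ by rw [sq]; field_simp] at this
  have : (-1 : F) ∈ P.P := by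
    have := P.mul_mem _ _ h2 hinv
    rwa [show -x * x⁻¹ = -1 by field_simp] at this
  exact P.neg_one_notMem this

lemma QF.FieldOrdering.total' (P : FieldOrdering F) {x : F} (h : x ∉ P.P) : -x ∈ P.P := by
  rcases P.total x with h' | h'
  · exact absurd h' h
  · exact h'

lemma QF.FieldOrdering.ssPos (P : FieldOrdering F) {x : F} (h : SS x) (hx : x ≠ 0) :
    x ∈ P.P ∧ -x ∉ P.P :=
  ⟨P.ssMem h, fun h' => hx (P.eqZero (P.ssMem h) h')⟩

lemma sum_sq_entries_eq_zero (hreal : ¬ SS (-1 : F)) {n : ℕ} {f : Fin n → F}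
    (h : ∑ i, f i ^ 2 = 0) (i : Fin n) : f i = 0 := by
  by_contra hf
  apply hreal
  have herase : ∑ j ∈ Finset.univ.erase i, f j ^ 2 = -(f i ^ 2) := by
    have h2 := Finset.sum_erase_add Finset.univ (fun j => f j ^ 2) (Finset.mem_univ i)
    rw [h] at h2
    linear_combination h2
  have : (-1 : F) = ∑ j ∈ Finset.univ.erase i, (f j * (f i)⁻¹) ^ 2 := by
    have : ∑ j ∈ Finset.univ.erase i, (f j * (f i)⁻¹) ^ 2
        = (∑ j ∈ Finset.univ.erase i, f j ^ 2) * ((f i)⁻¹) ^ 2 := by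
      rw [Finset.sum_mul]; simp [mul_pow]
    rw [this, herase]
    field_simp
  rw [this]
  exact SS_of_sum_finset _ _

end Aux

section Aux2

open QF

variable {F : Type*} [Field F]

/-- A preordering. -/
def IsPre (T : Set F) : Prop :=
  (∀ x : F, x ^ 2 ∈ T) ∧ (∀ x ∈ T, ∀ y ∈ T, x + y ∈ T) ∧ (∀ x ∈ T, ∀ y ∈ T, x * y ∈ T)

def shiftSet (M : Set F) (x : F) : Set F := {y | ∃ s ∈ M, ∃ t ∈ M, y = s - x * t}

lemma shift_spec {M : Set F} (hM : IsPre M) (h1 : (-1 : F) ∉ M) {x : F} (hx : x ∉ M) :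
    IsPre (shiftSet M x) ∧ (-1 : F) ∉ shiftSet M x ∧ M ⊆ shiftSet M x ∧ -x ∈ shiftSet M x := by
  obtain ⟨hsq, hadd, hmul⟩ := hM
  have h0 : (0 : F) ∈ M := by simpa using hsq 0
  have h1' : (1 : F) ∈ M := by simpa using hsq 1
  refine ⟨⟨?_, ?_, ?_⟩, ?_, ?_, ?_⟩
  · intro z; exact ⟨z ^ 2, hsq z, 0, h0, by ring⟩
  · rintro _ ⟨s, hs, t, ht, rfl⟩ _ ⟨s', hs', t', ht', rfl⟩
    exact ⟨s + s', hadd _ hs _ hs', t + t', hadd _ ht _ ht', by ring⟩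
  · rintro _ ⟨s, hs, t, ht, rfl⟩ _ ⟨s', hs', t', ht', rfl⟩
    exact ⟨s * s' + x ^ 2 * (t * t'),
      hadd _ (hmul _ hs _ hs') _ (hmul _ (hsq x) _ (hmul _ ht _ ht')),
      s * t' + t * s', hadd _ (hmul _ hs _ ht') _ (hmul _ ht _ hs'), by ring⟩
  · rintro ⟨s, hs, t, ht, het⟩
    by_cases ht0 : t = 0
    · rw [ht0] at het
      apply h1
      rw [show (-1 : F) = s by linear_combination het]
      exact hs
    · apply hx
      have hxe : x = (1 + s) * t * (t⁻¹) ^ 2 := by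
        have hxt : x * t = 1 + s := by linear_combination het
        rw [← hxt]; field_simp
      rw [hxe]
      exact hmul _ (hmul _ (hadd _ h1' _ hs) _ ht) _ (hsq t⁻¹)
  · intro m hm; exact ⟨m, hm, 0, h0, by ring⟩
  · exact ⟨0, h0, 1, h1', by ring⟩

theorem exists_ordering {T : Set F} (hT : IsPre T) (h1 : (-1 : F) ∉ T) :
    ∃ P : FieldOrdering F, T ⊆ P.P := by
  classical
  set S : Set (Set F) := {S | IsPre S ∧ (-1 : F) ∉ S ∧ T ⊆ S} with hS
  have hchainub : ∀ c ⊆ S, IsChain (· ⊆ ·) c → c.Nonempty →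
      ∃ ub ∈ S, ∀ s ∈ c, s ⊆ ub := by
    intro c hcS hchain hcne
    obtain ⟨s₀, hs₀⟩ := hcne
    refine ⟨⋃₀ c, ⟨⟨?_, ?_, ?_⟩, ?_, ?_⟩, fun s hs => Set.subset_sUnion_of_mem hs⟩
    · intro x; exact ⟨s₀, hs₀, (hcS hs₀).1.1 x⟩
    · rintro x ⟨sx, hsx, hxs⟩ y ⟨sy, hsy, hys⟩
      rcases hchain.total hsx hsy with hsub | hsub
      · exact ⟨sy, hsy, (hcS hsy).1.2.1 x (hsub hxs) y hys⟩
      · exact ⟨sx, hsx, (hcS hsx).1.2.1 x hxs y (hsub hys)⟩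
    · rintro x ⟨sx, hsx, hxs⟩ y ⟨sy, hsy, hys⟩
      rcases hchain.total hsx hsy with hsub | hsub
      · exact ⟨sy, hsy, (hcS hsy).1.2.2 x (hsub hxs) y hys⟩
      · exact ⟨sx, hsx, (hcS hsx).1.2.2 x hxs y (hsub hys)⟩
    · rintro ⟨s, hs, hmem⟩
      exact (hcS hs).2.1 hmem
    · exact (hcS hs₀).2.2.trans (Set.subset_sUnion_of_mem hs₀)
  obtain ⟨M, hTM, hMmax⟩ := zorn_subset_nonempty S hchainub T ⟨hT, h1, subset_rfl⟩
  · obtain ⟨⟨hsq, hadd, hmul⟩, hM1, hMT⟩ := hMmax.prop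
    have htotal : ∀ x : F, x ∈ M ∨ -x ∈ M := by
      intro x
      by_cases hx : x ∈ M
      · exact Or.inl hx
      · right
        obtain ⟨hpre', h1', hsub', hneg'⟩ := shift_spec ⟨hsq, hadd, hmul⟩ hM1 hx
        have hle : shiftSet M x ⊆ M := hMmax.2 ⟨hpre', h1', hMT.trans hsub'⟩ hsub'
        exact hle hneg'
    exact ⟨⟨M, fun x y hx hy => hadd x hx y hy, fun x y hx hy => hmul x hx y hy,
      htotal, hM1⟩, hMT⟩

/-- The preordering generated by two elements (over sums of squares). -/
def T2 (g₁ g₂ : F) : Set F :=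
  {y | ∃ s₀ s₁ s₂ s₃ : F, SS s₀ ∧ SS s₁ ∧ SS s₂ ∧ SS s₃ ∧
    y = s₀ + g₁ * s₁ + g₂ * s₂ + g₁ * g₂ * s₃}

lemma T2_pre (g₁ g₂ : F) : IsPre (T2 g₁ g₂) := by
  refine ⟨?_, ?_, ?_⟩
  · intro x
    exact ⟨x ^ 2, 0, 0, 0, SS.sq x, SS.zero, SS.zero, SS.zero, by ring⟩
  · rintro _ ⟨s₀, s₁, s₂, s₃, h₀, h₁, h₂, h₃, rfl⟩ _ ⟨t₀, t₁, t₂, t₃, k₀, k₁, k₂, k₃, rfl⟩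
    exact ⟨s₀ + t₀, s₁ + t₁, s₂ + t₂, s₃ + t₃, h₀.add k₀, h₁.add k₁, h₂.add k₂, h₃.add k₃,
      by ring⟩
  · rintro _ ⟨s₀, s₁, s₂, s₃, h₀, h₁, h₂, h₃, rfl⟩ _ ⟨t₀, t₁, t₂, t₃, k₀, k₁, k₂, k₃, rfl⟩
    refine ⟨s₀ * t₀ + g₁ ^ 2 * (s₁ * t₁) + g₂ ^ 2 * (s₂ * t₂) + (g₁ * g₂) ^ 2 * (s₃ * t₃),
      s₀ * t₁ + s₁ * t₀ + g₂ ^ 2 * (s₂ * t₃ + s₃ * t₂),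
      s₀ * t₂ + s₂ * t₀ + g₁ ^ 2 * (s₁ * t₃ + s₃ * t₁),
      s₀ * t₃ + s₃ * t₀ + s₁ * t₂ + s₂ * t₁, ?_, ?_, ?_, ?_, by ring⟩
    · exact (((h₀.mul k₀).add ((SS.sq g₁).mul (h₁.mul k₁))).add
        ((SS.sq g₂).mul (h₂.mul k₂))).add ((SS.sq (g₁ * g₂)).mul (h₃.mul k₃))
    · exact (((h₀.mul k₁).add (h₁.mul k₀))).add ((SS.sq g₂).mul ((h₂.mul k₃).add (h₃.mul k₂)))
    · exact (((h₀.mul k₂).add (h₂.mul k₀))).add ((SS.sq g₁).mul ((h₁.mul k₃).add (h₃.mul k₁)))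
    · exact (((h₀.mul k₃).add (h₃.mul k₀)).add (h₁.mul k₂)).add (h₂.mul k₁)

/-- The preordering generated by one element. -/
def T1 (g : F) : Set F := {y | ∃ s t : F, SS s ∧ SS t ∧ y = s + g * t}

lemma T1_pre (g : F) : IsPre (T1 g) := by
  refine ⟨?_, ?_, ?_⟩
  · intro x; exact ⟨x ^ 2, 0, SS.sq x, SS.zero, by ring⟩
  · rintro _ ⟨s, t, hs, ht, rfl⟩ _ ⟨s', t', hs', ht', rfl⟩
    exact ⟨s + s', t + t', hs.add hs', ht.add ht', by ring⟩
  · rintro _ ⟨s, t, hs, ht, rfl⟩ _ ⟨s', t', hs', ht', rfl⟩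
    exact ⟨s * s' + g ^ 2 * (t * t'), s * t' + t * s',
      (hs.mul hs').add ((SS.sq g).mul (ht.mul ht')), (hs.mul ht').add (ht.mul hs'), by ring⟩

end Aux2

section Aux3

open QF

variable {F : Type*} [Field F]

lemma qval_copies_eq (a b : F) {N : ℕ} (v : Fin N × Fin 4 → F) :
    qval (copies N ![1, a, b, -(a * b)]) v
      = (∑ j, v (j, 0) ^ 2) + a * (∑ j, v (j, 1) ^ 2) + b * (∑ j, v (j, 2) ^ 2)
        - a * b * (∑ j, v (j, 3) ^ 2) := by
  rw [qval, Fintype.sum_prod_type, Finset.sum_comm, Fin.sum_univ_four]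
  simp only [copies, Matrix.cons_val_zero, Matrix.cons_val_one, Matrix.head_cons,
    Matrix.cons_val_two, Matrix.tail_cons, Matrix.cons_val_three]
  simp only [neg_mul, Finset.sum_neg_distrib, ← Finset.mul_sum]
  ring

lemma wi_of_reps (a b : F) {N : ℕ} (fs : Fin 4 → Fin N → F)
    (hne : ∃ k j, fs k j ≠ 0)
    (hid : (∑ j, fs 0 j ^ 2) + a * (∑ j, fs 1 j ^ 2) + b * (∑ j, fs 2 j ^ 2)
      - a * b * (∑ j, fs 3 j ^ 2) = 0) :
    WeaklyIsotropic ![1, a, b, -(a * b)] := by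
  obtain ⟨k, j, hkj⟩ := hne
  have hN : 1 ≤ N := by have := j.isLt; omega
  refine ⟨N, hN, fun p => fs p.2 p.1, ?_, ?_⟩
  · intro h0
    exact hkj (by simpa using congrFun h0 (j, k))
  · rw [qval_copies_eq]
    exact hid

lemma wi_of_sums (a b : F) (σ : Fin 4 → F) (hσ : ∀ k, SS (σ k))
    (hne : ∃ k, σ k ≠ 0)
    (hid : σ 0 + a * σ 1 + b * σ 2 - a * b * σ 3 = 0) :
    WeaklyIsotropic ![1, a, b, -(a * b)] := by
  classical
  choose n f hf using hσ
  set N : ℕ := ∑ k, n k with hN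
  have hle : ∀ k, n k ≤ N := by
    intro k
    exact Finset.single_le_sum (f := n) (fun i _ => Nat.zero_le _) (Finset.mem_univ k)
  set g : Fin 4 → ℕ → F := fun k i => if h : i < n k then f k ⟨i, h⟩ else 0 with hg
  have hsum : ∀ k, (∑ j : Fin N, g k (j : ℕ) ^ 2) = σ k := by
    intro k
    have h1 : (∑ j : Fin N, g k (j : ℕ) ^ 2) = ∑ i ∈ Finset.range N, g k i ^ 2 :=
      Fin.sum_univ_eq_sum_range (fun i => g k i ^ 2) N
    have h2 : ∑ i ∈ Finset.range (n k), g k i ^ 2 = ∑ i ∈ Finset.range N, g k i ^ 2 := by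
      refine Finset.sum_subset (Finset.range_subset_range.mpr (hle k)) ?_
      intro i _ hi
      rw [Finset.mem_range, not_lt] at hi
      simp [hg, Nat.not_lt.mpr hi]
    have h3 : ∑ i ∈ Finset.range (n k), g k i ^ 2 = ∑ i : Fin (n k), f k i ^ 2 := by
      rw [← Fin.sum_univ_eq_sum_range (fun i => g k i ^ 2) (n k)]
      refine Finset.sum_congr rfl ?_
      intro i _
      simp [hg, i.isLt]
    rw [h1, ← h2, h3, ← hf k]
  refine wi_of_reps a b (N := N) (fun k (j : Fin N) => g k (j : ℕ)) ?_ ?_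
  · obtain ⟨k, hk⟩ := hne
    by_contra hall
    push_neg at hall
    apply hk
    rw [← hsum k]
    exact Finset.sum_eq_zero fun j _ => by rw [hall k j]; ring
  · rw [hsum 0, hsum 1, hsum 2, hsum 3]
    exact hid

lemma wi_elim (hreal : ¬ SS (-1 : F)) {a b : F}
    (h : WeaklyIsotropic ![1, a, b, -(a * b)]) :
    ∃ σ : Fin 4 → F, (∀ k, SS (σ k)) ∧ (∃ k, σ k ≠ 0) ∧
      σ 0 + a * σ 1 + b * σ 2 - a * b * σ 3 = 0 := by
  obtain ⟨n, hn, v, hv, hq⟩ := h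
  refine ⟨fun k => ∑ j : Fin n, v (j, k) ^ 2, fun k => SS_of_sum _, ?_, ?_⟩
  · obtain ⟨p, hp⟩ := Function.ne_iff.mp hv
    refine ⟨p.2, fun h0 => ?_⟩
    have := sum_sq_entries_eq_zero hreal h0 p.1
    exact hp (by simpa using this)
  · rw [← qval_copies_eq a b v]
    exact hq

lemma mem_harrison {a : F} {P : FieldOrdering F} :
    P ∈ Harrison F a ↔ a ∈ P.P ∧ -a ∉ P.P := Iff.rfl

lemma not_mem_harrison {a : F} (ha : a ≠ 0) {P : FieldOrdering F}
    (h : P ∉ Harrison F a) : -a ∈ P.P ∧ a ∉ P.P := by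
  rw [mem_harrison] at h
  push_neg at h
  by_cases hmem : a ∈ P.P
  · have hneg := h hmem
    exact absurd (P.eqZero hmem hneg) ha
  · exact ⟨P.total' hmem, hmem⟩

lemma harrison_compl {a : F} (ha : a ≠ 0) : (Harrison F a)ᶜ = Harrison F (-a) := by
  ext P
  simp only [Set.mem_compl_iff, mem_harrison, neg_neg]
  constructor
  · intro h
    push_neg at h
    by_cases hmem : a ∈ P.P
    · have := h hmem
      exact absurd (P.eqZero hmem this) ha
    · exact ⟨P.total' hmem, hmem⟩
  · rintro ⟨h1, h2⟩ ⟨h3, _⟩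
    exact h2 h3

lemma harrison_univ : Harrison F (1 : F) = Set.univ := by
  ext P
  simp only [Set.mem_univ, iff_true, mem_harrison]
  exact ⟨P.oneMem, fun h => P.neg_one_notMem h⟩

lemma harrison_neg_one : Harrison F (-1 : F) = ∅ := by
  ext P
  simp only [Set.mem_empty_iff_false, iff_false, mem_harrison]
  rintro ⟨h, _⟩
  exact P.neg_one_notMem h

lemma isOpen_harrison {a : F} (ha : a ≠ 0) : IsOpen (Harrison F a) :=
  TopologicalSpace.isOpen_generateFrom_of_mem ⟨a, ha, rfl⟩

lemma isClopen_harrison {a : F} (ha : a ≠ 0) : IsClopen (Harrison F a) := by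
  constructor
  · rw [← isOpen_compl_iff, harrison_compl ha]
    exact isOpen_harrison (neg_ne_zero.mpr ha)
  · exact isOpen_harrison ha

end Aux3

section Aux4

open QF

variable {F : Type*} [Field F]

/-- Key lemma: weak isotropy of `⟨1,a,b,-ab⟩` makes `H(a) ∩ H(b)` a Harrison set. -/
lemma inter_harrison (hreal : ¬ SS (-1 : F)) {a b : F} (ha : a ≠ 0) (hb : b ≠ 0)
    (hwi : WeaklyIsotropic ![1, a, b, -(a * b)]) :
    ∃ c : F, c ≠ 0 ∧ Harrison F a ∩ Harrison F b = Harrison F c := by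
  obtain ⟨σ, hσ, hσne, hid⟩ := wi_elim hreal hwi
  by_cases hc : a * σ 1 + b * σ 2 = 0
  · -- degenerate case
    by_cases h1 : σ 1 = 0
    · have h2 : σ 2 = 0 := by
        have : b * σ 2 = 0 := by rw [h1] at hc; linear_combination hc
        rcases mul_eq_zero.mp this with h | h
        · exact absurd h hb
        · exact h
      have h3 : σ 3 ≠ 0 := by
        intro h3
        obtain ⟨k, hk⟩ := hσne
        apply hk
        fin_cases k
        · have : σ 0 = 0 := by rw [h1, h2, h3] at hid; linear_combination hid
          simpa using this
        · simpa using h1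
        · simpa using h2
        · simpa using h3
      have h0 : σ 0 = a * b * σ 3 := by rw [h1, h2] at hid; linear_combination hid
      -- a*b is a nonzero sum of squares, so H(a) ∩ H(b) = H(a)
      have hab : SS (a * b) := by
        have : a * b = σ 0 * (σ 3 * ((σ 3)⁻¹) ^ 2) := by
          rw [h0]; field_simp
        rw [this]
        exact (hσ 0).mul ((hσ 3).mul (SS.sq _))
      have habne : a * b ≠ 0 := mul_ne_zero ha hb
      refine ⟨a, ha, ?_⟩
      refine Set.eq_of_subset_of_subset Set.inter_subset_left (fun P hP => ?_)
      obtain ⟨hamem, haneg⟩ := mem_harrison.mp hP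
      have habP := P.ssPos hab habne
      have hbmem : b ∈ P.P := by
        by_cases hbm : b ∈ P.P
        · exact hbm
        · exfalso
          have := P.mul_mem _ _ hamem (P.total' hbm)
          rw [show a * -b = -(a * b) by ring] at this
          exact habP.2 this
      refine ⟨hP, hbmem, fun hbneg => ?_⟩
      have := P.mul_mem _ _ hamem hbneg
      rw [show a * -b = -(a * b) by ring] at this
      exact habP.2 this
    · -- σ 1 ≠ 0, σ 2 ≠ 0 : intersection is empty
      have h2 : σ 2 ≠ 0 := by
        intro h2
        apply h1
        have : a * σ 1 = 0 := by rw [h2] at hc; linear_combination hc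
        rcases mul_eq_zero.mp this with h | h
        · exact absurd h ha
        · exact h
      refine ⟨-1, by norm_num, ?_⟩
      rw [harrison_neg_one]
      refine Set.eq_empty_of_forall_notMem (fun P hP => ?_)
      obtain ⟨⟨hamem, _⟩, hbmem, _⟩ := hP
      have hA : a * σ 1 ∈ P.P := P.mul_mem _ _ hamem (P.ssMem (hσ 1))
      have hB : -(a * σ 1) ∈ P.P := by
        have := P.mul_mem _ _ hbmem (P.ssMem (hσ 2))
        rwa [show b * σ 2 = -(a * σ 1) by linear_combination hc] at this
      have := P.eqZero hA hB
      rcases mul_eq_zero.mp this with h | h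
      · exact ha h
      · exact h1 h
  · -- main case : c = a σ₁ + b σ₂ ≠ 0
    refine ⟨a * σ 1 + b * σ 2, hc, ?_⟩
    ext P
    constructor
    · rintro ⟨⟨hamem, _⟩, hbmem, _⟩
      have hmem : a * σ 1 + b * σ 2 ∈ P.P :=
        P.add_mem _ _ (P.mul_mem _ _ hamem (P.ssMem (hσ 1)))
          (P.mul_mem _ _ hbmem (P.ssMem (hσ 2)))
      exact ⟨hmem, fun hneg => hc (P.eqZero hmem hneg)⟩
    · intro hP
      by_contra hPab
      -- then -(aσ₁+bσ₂) ∈ P, contradicting hP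
      have hneg : -(a * σ 1 + b * σ 2) ∈ P.P := by
        have hsplit : (P ∉ Harrison F a ∧ P ∉ Harrison F b) ∨ -(a * b) ∈ P.P := by
          by_cases hA : P ∈ Harrison F a
          · right
            have hB : P ∉ Harrison F b := fun hB => hPab ⟨hA, hB⟩
            obtain ⟨hbneg, _⟩ := not_mem_harrison hb hB
            have := P.mul_mem _ _ hA.1 hbneg
            rwa [show a * -b = -(a * b) by ring] at this
          · by_cases hB : P ∈ Harrison F b
            · right
              obtain ⟨haneg, _⟩ := not_mem_harrison ha hA
              have := P.mul_mem _ _ haneg hB.1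
              rwa [show -a * b = -(a * b) by ring] at this
            · exact Or.inl ⟨hA, hB⟩
        rcases hsplit with ⟨hA, hB⟩ | habneg
        · obtain ⟨haneg, _⟩ := not_mem_harrison ha hA
          obtain ⟨hbneg, _⟩ := not_mem_harrison hb hB
          have := P.add_mem _ _ (P.mul_mem _ _ haneg (P.ssMem (hσ 1)))
            (P.mul_mem _ _ hbneg (P.ssMem (hσ 2)))
          rwa [show -a * σ 1 + -b * σ 2 = -(a * σ 1 + b * σ 2) by ring] at this
        · have := P.add_mem _ _ (P.ssMem (hσ 0)) (P.mul_mem _ _ habneg (P.ssMem (hσ 3)))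
          rwa [show σ 0 + -(a * b) * σ 3 = -(a * σ 1 + b * σ 2) by linear_combination hid]
            at this
      exact hP.2 hneg
end Aux4

section Aux5

open QF

variable {F : Type*} [Field F]

/-- Encoding of orderings as boolean-valued functions. -/
noncomputable def enc : FieldOrdering F → (F → Bool) := fun P a =>
  if a ∈ P.P then true else false

lemma enc_eq_true {P : FieldOrdering F} {a : F} : enc P a = true ↔ a ∈ P.P := by
  by_cases h : a ∈ P.P <;> simp [enc, h]

lemma enc_eq_false {P : FieldOrdering F} {a : F} : enc P a = false ↔ a ∉ P.P := by
  by_cases h : a ∈ P.P <;> simp [enc, h]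

lemma enc_preimage_true (a : F) :
    (fun P : FieldOrdering F => enc P a) ⁻¹' {true}
      = if a = 0 then Set.univ else Harrison F a := by
  split_ifs with h0
  · subst h0
    refine Set.eq_univ_of_forall (fun P => ?_)
    simp only [Set.mem_preimage, Set.mem_singleton_iff, enc_eq_true]
    exact P.zeroMem
  · ext P
    simp only [Set.mem_preimage, Set.mem_singleton_iff, enc_eq_true, mem_harrison]
    exact ⟨fun h => ⟨h, fun h' => h0 (P.eqZero h h')⟩, And.left⟩

lemma enc_preimage_false (a : F) :
    (fun P : FieldOrdering F => enc P a) ⁻¹' {false}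
      = if a = 0 then ∅ else Harrison F (-a) := by
  split_ifs with h0
  · subst h0
    refine Set.eq_empty_of_forall_notMem (fun P hP => ?_)
    simp only [Set.mem_preimage, Set.mem_singleton_iff, enc_eq_false] at hP
    exact hP P.zeroMem
  · ext P
    simp only [Set.mem_preimage, Set.mem_singleton_iff, enc_eq_false, mem_harrison, neg_neg]
    constructor
    · intro h
      exact ⟨P.total' h, h⟩
    · rintro ⟨_, h2⟩
      exact h2

lemma continuous_enc : Continuous (enc (F := F)) := by
  refine continuous_pi (fun a => continuous_discrete_rng.mpr (fun bb => ?_))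
  cases bb
  · rw [enc_preimage_false]
    split_ifs with h0
    · exact isOpen_empty
    · exact isOpen_harrison (neg_ne_zero.mpr h0)
  · rw [enc_preimage_true]
    split_ifs with h0
    · exact isOpen_univ
    · exact isOpen_harrison h0

lemma inducing_enc : Topology.IsInducing (enc (F := F)) := by
  constructor
  refine le_antisymm (continuous_iff_le_induced.mp continuous_enc) ?_
  show TopologicalSpace.induced (enc (F := F)) _ ≤ TopologicalSpace.generateFrom _
  refine le_generateFrom ?_
  rintro s ⟨a, ha, rfl⟩
  have : Harrison F a = enc ⁻¹'
      (((fun f : F → Bool => f a) ⁻¹' {true}) ∩ ((fun f : F → Bool => f (-a)) ⁻¹' {false})) := by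
    ext P
    simp only [Set.mem_preimage, Set.mem_inter_iff, Set.mem_singleton_iff, mem_harrison,
      enc_eq_true, enc_eq_false]
  rw [this]
  refine isOpen_induced_iff.mpr ⟨_, ?_, rfl⟩
  exact (((isOpen_discrete _).preimage (continuous_apply a)).inter
    ((isOpen_discrete _).preimage (continuous_apply (-a))))

lemma isClosed_range_enc : IsClosed (Set.range (enc (F := F))) := by
  have hrange : Set.range (enc (F := F)) =
      {f : F → Bool | (∀ x y : F, f x = true → f y = true → f (x + y) = true) ∧
        (∀ x y : F, f x = true → f y = true → f (x * y) = true) ∧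
        (∀ x : F, f x = true ∨ f (-x) = true) ∧ f (-1) = false} := by
    ext f
    constructor
    · rintro ⟨P, rfl⟩
      refine ⟨fun x y hx hy => ?_, fun x y hx hy => ?_, fun x => ?_, ?_⟩
      · rw [enc_eq_true] at *
        exact P.add_mem x y hx hy
      · rw [enc_eq_true] at *
        exact P.mul_mem x y hx hy
      · rcases P.total x with h | h
        · exact Or.inl (enc_eq_true.mpr h)
        · exact Or.inr (enc_eq_true.mpr h)
      · exact enc_eq_false.mpr P.neg_one_notMem
    · rintro ⟨h1, h2, h3, h4⟩
      refine ⟨⟨{x | f x = true}, h1, h2, h3, by simp [h4]⟩, ?_⟩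
      funext a
      simp only [enc, Set.mem_setOf_eq]
      by_cases h : f a = true
      · rw [if_pos h, h]
      · rw [if_neg h]
        exact ((Bool.not_eq_true (f a)).mp h).symm
  rw [hrange]
  have hkey : ∀ (z : F) (bb : Bool), IsClosed {f : F → Bool | f z = bb} := by
    intro z bb
    have h : {f : F → Bool | f z = bb} = (fun f : F → Bool => f z) ⁻¹' {bb} := rfl
    rw [h]
    exact IsClosed.preimage (continuous_apply z) (isClosed_discrete _)
  have hkeyo : ∀ (z : F) (bb : Bool), IsOpen {f : F → Bool | f z = bb} := by
    intro z bb
    have h : {f : F → Bool | f z = bb} = (fun f : F → Bool => f z) ⁻¹' {bb} := rfl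
    rw [h]
    exact IsOpen.preimage (continuous_apply z) (isOpen_discrete _)
  have e1 : IsClosed {f : F → Bool | ∀ x y : F, f x = true → f y = true → f (x + y) = true} := by
    have : {f : F → Bool | ∀ x y : F, f x = true → f y = true → f (x + y) = true}
        = ⋂ (x : F), ⋂ (y : F),
          ({f : F → Bool | f x = true}ᶜ ∪ {f : F → Bool | f y = true}ᶜ
            ∪ {f : F → Bool | f (x + y) = true}) := by
      ext f
      simp only [Set.mem_iInter, Set.mem_setOf_eq, Set.mem_union, Set.mem_compl_iff]
      constructor
      · intro h x y
        by_cases hx : f x = true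
        · by_cases hy : f y = true
          · exact Or.inr (h x y hx hy)
          · exact Or.inl (Or.inr hy)
        · exact Or.inl (Or.inl hx)
      · intro h x y hx hy
        rcases h x y with (h' | h') | h'
        · exact absurd hx h'
        · exact absurd hy h'
        · exact h'
    rw [this]
    exact isClosed_iInter fun x => isClosed_iInter fun y =>
      (((hkeyo x true).isClosed_compl.union (hkeyo y true).isClosed_compl).union
        (hkey (x + y) true))
  have e2 : IsClosed {f : F → Bool | ∀ x y : F, f x = true → f y = true → f (x * y) = true} := by
    have : {f : F → Bool | ∀ x y : F, f x = true → f y = true → f (x * y) = true}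
        = ⋂ (x : F), ⋂ (y : F),
          ({f : F → Bool | f x = true}ᶜ ∪ {f : F → Bool | f y = true}ᶜ
            ∪ {f : F → Bool | f (x * y) = true}) := by
      ext f
      simp only [Set.mem_iInter, Set.mem_setOf_eq, Set.mem_union, Set.mem_compl_iff]
      constructor
      · intro h x y
        by_cases hx : f x = true
        · by_cases hy : f y = true
          · exact Or.inr (h x y hx hy)
          · exact Or.inl (Or.inr hy)
        · exact Or.inl (Or.inl hx)
      · intro h x y hx hy
        rcases h x y with (h' | h') | h'
        · exact absurd hx h'
        · exact absurd hy h'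
        · exact h'
    rw [this]
    exact isClosed_iInter fun x => isClosed_iInter fun y =>
      (((hkeyo x true).isClosed_compl.union (hkeyo y true).isClosed_compl).union
        (hkey (x * y) true))
  have e3 : IsClosed {f : F → Bool | ∀ x : F, f x = true ∨ f (-x) = true} := by
    have : {f : F → Bool | ∀ x : F, f x = true ∨ f (-x) = true}
        = ⋂ (x : F), ({f : F → Bool | f x = true} ∪ {f : F → Bool | f (-x) = true}) := by
      ext f
      simp [Set.mem_iInter]
    rw [this]
    exact isClosed_iInter fun x => (hkey x true).union (hkey (-x) true)
  have e4 : IsClosed {f : F → Bool | f (-1) = false} := hkey (-1) false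
  have : {f : F → Bool | (∀ x y : F, f x = true → f y = true → f (x + y) = true) ∧
        (∀ x y : F, f x = true → f y = true → f (x * y) = true) ∧
        (∀ x : F, f x = true ∨ f (-x) = true) ∧ f (-1) = false}
      = {f : F → Bool | ∀ x y : F, f x = true → f y = true → f (x + y) = true}
        ∩ ({f : F → Bool | ∀ x y : F, f x = true → f y = true → f (x * y) = true}
        ∩ ({f : F → Bool | ∀ x : F, f x = true ∨ f (-x) = true}
        ∩ {f : F → Bool | f (-1) = false})) := by
    ext f
    simp only [Set.mem_setOf_eq, Set.mem_inter_iff]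
  rw [this]
  exact e1.inter (e2.inter (e3.inter e4))

lemma compactSpace_ordering : CompactSpace (FieldOrdering F) := by
  constructor
  rw [inducing_enc.isCompact_iff, Set.image_univ]
  exact isClosed_range_enc.isCompact

end Aux5

section Aux6

open QF

variable {F : Type*} [Field F]

lemma forward_wi (hSAP : IsSAP F) {a b : F} (ha : a ≠ 0) (hb : b ≠ 0) :
    WeaklyIsotropic ![1, a, b, -(a * b)] := by
  by_cases hreal : SS (-1 : F)
  · obtain ⟨n, f, hf⟩ := hreal
    refine wi_of_reps a b (N := n + 1) ![Fin.cons 1 f, 0, 0, 0] ⟨0, 0, by simp⟩ ?_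
    have h0 : (∑ j : Fin (n + 1), (Fin.cons (1:F) f : Fin (n+1) → F) j ^ 2) = 0 := by
      rw [show (fun j => (Fin.cons (1:F) f : Fin (n+1) → F) j ^ 2)
        = Fin.cons ((1:F)^2) (fun j => f j ^ 2) from ?_]
      · rw [Fin.sum_cons, ← hf]; ring
      · funext j
        refine Fin.cases ?_ ?_ j <;> simp
    simp only [Matrix.cons_val_zero, Matrix.cons_val_one, Matrix.head_cons,
      Matrix.cons_val_two, Matrix.tail_cons, Matrix.cons_val_three]
    rw [h0]
    simp
  · obtain ⟨c, hc0, hcH⟩ := hSAP (Harrison F a ∩ Harrison F b)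
      ((isClopen_harrison ha).inter (isClopen_harrison hb))
    -- Step 2 : no ordering makes both -ac and -bc nonnegative
    have hstep2 : ∀ P : FieldOrdering F, ¬(-(a * c) ∈ P.P ∧ -(b * c) ∈ P.P) := by
      rintro P ⟨hac, hbc⟩
      by_cases hcm : c ∈ P.P
      · have hcneg : -c ∉ P.P := fun h => hc0 (P.eqZero hcm h)
        have hPc : P ∈ Harrison F c := ⟨hcm, hcneg⟩
        rw [← hcH] at hPc
        obtain ⟨⟨hamem, haneg⟩, _⟩ := hPc
        have h1 : -(a * c) * c ∈ P.P := P.mul_mem _ _ hac hcm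
        have h2 : (-(a * c) * c) * (c⁻¹) ^ 2 ∈ P.P := P.mul_mem _ _ h1 (P.sqMem _)
        rw [show (-(a * c) * c) * (c⁻¹) ^ 2 = -a from by field_simp] at h2
        exact haneg h2
      · have hcneg : -c ∈ P.P := P.total' hcm
        have ha' : a ∈ P.P := by
          have h1 : -(a * c) * -c ∈ P.P := P.mul_mem _ _ hac hcneg
          have h2 := P.mul_mem _ _ h1 (P.sqMem c⁻¹)
          rwa [show -(a * c) * -c * (c⁻¹) ^ 2 = a from by field_simp] at h2
        have hb' : b ∈ P.P := by
          have h1 : -(b * c) * -c ∈ P.P := P.mul_mem _ _ hbc hcneg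
          have h2 := P.mul_mem _ _ h1 (P.sqMem c⁻¹)
          rwa [show -(b * c) * -c * (c⁻¹) ^ 2 = b from by field_simp] at h2
        have hana : -a ∉ P.P := fun h => ha (P.eqZero ha' h)
        have hbnb : -b ∉ P.P := fun h => hb (P.eqZero hb' h)
        have hPc : P ∈ Harrison F c := by
          rw [← hcH]; exact ⟨⟨ha', hana⟩, hb', hbnb⟩
        exact hcm hPc.1
    -- Step 3 : the preordering generated by -ac, -bc is improper
    have himp : (-1 : F) ∈ T2 (-(a * c)) (-(b * c)) := by
      by_contra h1
      obtain ⟨P, hP⟩ := exists_ordering (T2_pre _ _) h1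
      exact hstep2 P ⟨hP ⟨0, 1, 0, 0, SS.zero, SS.one, SS.zero, SS.zero, by ring⟩,
        hP ⟨0, 0, 1, 0, SS.zero, SS.zero, SS.one, SS.zero, by ring⟩⟩
    obtain ⟨s₀, s₁, s₂, s₃, hs₀, hs₁, hs₂, hs₃, hE⟩ := himp
    have hτSS : SS (1 + s₀) := SS.one.add hs₀
    have hτ0 : (1 : F) + s₀ ≠ 0 := by
      intro h
      exact hreal (by rw [show (-1 : F) = s₀ by linear_combination -h]; exact hs₀)
    have hE' : (1 + s₀) - a * c * s₁ - b * c * s₂ + a * b * c ^ 2 * s₃ = 0 := by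
      linear_combination -hE
    by_cases hu : a * s₁ + b * s₂ = 0
    · -- u = 0 : then -ab is a nonzero sum of squares
      have hw : (1 + s₀) + a * b * (c ^ 2 * s₃) = 0 := by
        linear_combination hE' + c * hu
      have hwne : c ^ 2 * s₃ ≠ 0 := fun h => hτ0 (by linear_combination hw - a * b * h)
      have hρSS : SS ((1 + s₀) * ((c ^ 2 * s₃) * ((c ^ 2 * s₃)⁻¹) ^ 2)) :=
        hτSS.mul (((SS.sq c).mul hs₃).mul (SS.sq _))
      have hρ : (1 + s₀) * ((c ^ 2 * s₃) * ((c ^ 2 * s₃)⁻¹) ^ 2) = -(a * b) := by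
        have h1 : (1 + s₀) = -(a * b) * (c ^ 2 * s₃) := by linear_combination hw
        rw [h1]
        field_simp
        ring
        rw [mul_inv_cancel₀ (right_ne_zero_of_mul hwne)]
      refine wi_of_sums a b
        ![0, (1 + s₀) * ((c ^ 2 * s₃) * ((c ^ 2 * s₃)⁻¹) ^ 2), a ^ 2, 0] ?_ ?_ ?_
      · intro k
        fin_cases k
        · simpa using SS.zero
        · simpa using hρSS
        · simpa using SS.sq a
        · simpa using SS.zero
      · exact ⟨2, by simpa using pow_ne_zero 2 ha⟩
      · simp only [Matrix.cons_val_zero, Matrix.cons_val_one, Matrix.head_cons,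
          Matrix.cons_val_two, Matrix.tail_cons, Matrix.cons_val_three]
        linear_combination a * hρ
    · -- u ≠ 0
      have hs₁' : SS ((1 + s₀) * s₁ + (b * c) ^ 2 * (s₂ * s₃)) :=
        (hτSS.mul hs₁).add ((SS.sq _).mul (hs₂.mul hs₃))
      have hs₂' : SS ((1 + s₀) * s₂ + (a * c) ^ 2 * (s₁ * s₃)) :=
        (hτSS.mul hs₂).add ((SS.sq _).mul (hs₁.mul hs₃))
      have hkey : c * (a * s₁ + b * s₂) ^ 2
          = a * ((1 + s₀) * s₁ + (b * c) ^ 2 * (s₂ * s₃))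
            + b * ((1 + s₀) * s₂ + (a * c) ^ 2 * (s₁ * s₃)) := by
        linear_combination (-(a * s₁ + b * s₂)) * hE'
      by_cases h1 : (-1 : F) ∈ T1 (-(a * b))
      · obtain ⟨s, t, hs, ht, hst⟩ := h1
        refine wi_of_sums a b ![1 + s, 0, 0, t] ?_ ?_ ?_
        · intro k
          fin_cases k
          · simpa using SS.one.add hs
          · simpa using SS.zero
          · simpa using SS.zero
          · simpa using ht
        · refine ⟨0, ?_⟩
          simp only [Matrix.cons_val_zero]
          intro h
          exact hreal (by rw [show (-1 : F) = s by linear_combination -h]; exact hs)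
        · simp only [Matrix.cons_val_zero, Matrix.cons_val_one, Matrix.head_cons,
            Matrix.cons_val_two, Matrix.tail_cons, Matrix.cons_val_three]
          linear_combination -hst
      · by_cases hx : -(c * (a * s₁ + b * s₂) ^ 2) ∈ T1 (-(a * b))
        · obtain ⟨s, t, hs, ht, hst⟩ := hx
          have hcu : c * (a * s₁ + b * s₂) ^ 2 ≠ 0 := mul_ne_zero hc0 (pow_ne_zero 2 hu)
          refine wi_of_sums a b
            ![s, (1 + s₀) * s₁ + (b * c) ^ 2 * (s₂ * s₃),
              (1 + s₀) * s₂ + (a * c) ^ 2 * (s₁ * s₃), t] ?_ ?_ ?_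
          · intro k
            fin_cases k
            · simpa using hs
            · simpa using hs₁'
            · simpa using hs₂'
            · simpa using ht
          · by_cases hs0 : s = 0
            · refine ⟨3, ?_⟩
              simp only [Matrix.cons_val_three, Matrix.tail_cons, Matrix.head_cons]
              intro h
              exact hcu (by linear_combination -hst - hs0 + (a * b) * h)
            · exact ⟨0, by simpa using hs0⟩
          · simp only [Matrix.cons_val_zero, Matrix.cons_val_one, Matrix.head_cons,
              Matrix.cons_val_two, Matrix.tail_cons, Matrix.cons_val_three]
            linear_combination -hst - hkey
        · exfalso
          obtain ⟨hpre', h1', hsub', hneg'⟩ := shift_spec (T1_pre (-(a * b))) h1 hx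
          obtain ⟨P, hP⟩ := exists_ordering hpre' h1'
          have hcu2 : c * (a * s₁ + b * s₂) ^ 2 ∈ P.P := by
            have := hP hneg'
            rwa [neg_neg] at this
          have habm : -(a * b) ∈ P.P := hP (hsub' ⟨0, 1, SS.zero, SS.one, by ring⟩)
          have habn : a * b ∉ P.P := fun h => (mul_ne_zero ha hb) (P.eqZero h habm)
          have hnotab : P ∉ Harrison F a ∩ Harrison F b := by
            rintro ⟨hA, hB⟩
            exact habn (P.mul_mem _ _ hA.1 hB.1)
          rw [hcH] at hnotab
          have hcneg : -c ∈ P.P := by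
            by_cases hcm : c ∈ P.P
            · by_contra h
              exact hnotab ⟨hcm, h⟩
            · exact P.total' hcm
          have hneg2 : -(c * (a * s₁ + b * s₂) ^ 2) ∈ P.P := by
            have := P.mul_mem _ _ hcneg (P.sqMem (a * s₁ + b * s₂))
            rwa [show -c * (a * s₁ + b * s₂) ^ 2 = -(c * (a * s₁ + b * s₂) ^ 2) by ring]
              at this
          exact (mul_ne_zero hc0 (pow_ne_zero 2 hu)) (P.eqZero hcu2 hneg2)

end Aux6

section Aux7

open QF

variable {F : Type*} [Field F]

lemma union_harrison (hreal : ¬ SS (-1 : F))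
    (hwi : ∀ a b : F, a ≠ 0 → b ≠ 0 → WeaklyIsotropic ![1, a, b, -(a * b)])
    {a b : F} (ha : a ≠ 0) (hb : b ≠ 0) :
    ∃ c : F, c ≠ 0 ∧ Harrison F a ∪ Harrison F b = Harrison F c := by
  obtain ⟨c, hc, hcap⟩ := inter_harrison hreal (neg_ne_zero.mpr ha) (neg_ne_zero.mpr hb)
    (hwi (-a) (-b) (neg_ne_zero.mpr ha) (neg_ne_zero.mpr hb))
  refine ⟨-c, neg_ne_zero.mpr hc, ?_⟩
  have h1 : (Harrison F a ∪ Harrison F b)ᶜ = Harrison F c := by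
    rw [Set.compl_union, harrison_compl ha, harrison_compl hb, hcap]
  rw [← harrison_compl hc, ← h1, compl_compl]

lemma sInter_harrison (hreal : ¬ SS (-1 : F))
    (hwi : ∀ a b : F, a ≠ 0 → b ≠ 0 → WeaklyIsotropic ![1, a, b, -(a * b)])
    (f : Set (Set (FieldOrdering F))) (hfin : f.Finite)
    (hsub : f ⊆ {s | ∃ a : F, a ≠ 0 ∧ s = Harrison F a}) :
    ∃ c : F, c ≠ 0 ∧ ⋂₀ f = Harrison F c := by
  classical
  revert hsub
  refine Set.Finite.induction_on (motive := fun f _ =>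
    f ⊆ {s | ∃ a : F, a ≠ 0 ∧ s = Harrison F a} →
      ∃ c : F, c ≠ 0 ∧ ⋂₀ f = Harrison F c) f hfin ?_ ?_
  · intro _
    exact ⟨1, one_ne_zero, by rw [Set.sInter_empty, harrison_univ]⟩
  · intro t f htf hffin ih hsub
    obtain ⟨c, hc, hfc⟩ := ih (fun x hx => hsub (Set.mem_insert_of_mem t hx))
    obtain ⟨x, hx, hxt⟩ := hsub (Set.mem_insert t f)
    obtain ⟨d, hd, hdx⟩ := inter_harrison hreal hx hc (hwi x c hx hc)
    exact ⟨d, hd, by rw [Set.sInter_insert, hfc, hxt, hdx]⟩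

lemma biUnion_harrison (hreal : ¬ SS (-1 : F))
    (hwi : ∀ a b : F, a ≠ 0 → b ≠ 0 → WeaklyIsotropic ![1, a, b, -(a * b)])
    {ι : Type*} [DecidableEq ι] (t : Finset ι) (g : ι → F) (hg : ∀ i ∈ t, g i ≠ 0) :
    ∃ c : F, c ≠ 0 ∧ (⋃ i ∈ t, Harrison F (g i)) = Harrison F c := by
  classical
  induction t using Finset.induction_on with
  | empty =>
    refine ⟨-1, by norm_num, ?_⟩
    rw [harrison_neg_one]
    simp
  | @insert i t hit ih =>
    obtain ⟨c, hc, hct⟩ := ih (fun j hj => hg j (Finset.mem_insert_of_mem hj))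
    have hgi : g i ≠ 0 := hg i (Finset.mem_insert_self i t)
    obtain ⟨d, hd, hdu⟩ := union_harrison hreal hwi hgi hc
    refine ⟨d, hd, ?_⟩
    rw [Finset.set_biUnion_insert, hct, hdu]

lemma backward_sap
    (hwi : ∀ a b : F, a ≠ 0 → b ≠ 0 → WeaklyIsotropic ![1, a, b, -(a * b)]) :
    IsSAP F := by
  classical
  intro s hs
  rcases isEmpty_or_nonempty (FieldOrdering F) with hE | hNE
  · refine ⟨1, one_ne_zero, ?_⟩
    ext P
    exact (hE.elim P)
  · have hreal : ¬ SS (-1 : F) := by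
      obtain ⟨P⟩ := hNE
      exact fun h => P.neg_one_notMem (P.ssMem h)
    haveI : CompactSpace (FieldOrdering F) := compactSpace_ordering
    have hcomp : IsCompact s := hs.isClosed.isCompact
    have hbasis := TopologicalSpace.isTopologicalBasis_of_subbasis
      (s := {u : Set (FieldOrdering F) | ∃ a : F, a ≠ 0 ∧ u = Harrison F a})
      (t := orderingTopology F) rfl
    -- choose basic neighbourhoods inside s
    have hnbhd : ∀ P : FieldOrdering F, P ∈ s → ∃ u, u ∈ ((fun f : Set (Set (FieldOrdering F)) => ⋂₀ f) ''
        {f : Set (Set (FieldOrdering F)) | f.Finite ∧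
          f ⊆ {u | ∃ a : F, a ≠ 0 ∧ u = Harrison F a}}) ∧ P ∈ u ∧ u ⊆ s := by
      intro P hP
      exact hbasis.exists_subset_of_mem_open hP hs.isOpen
    choose! u hu hPu hus using hnbhd
    -- each basic set is a Harrison set
    have hbasic : ∀ P ∈ s, ∃ c : F, c ≠ 0 ∧ u P = Harrison F c := by
      intro P hP
      obtain ⟨f, ⟨hfin, hsub⟩, hfu⟩ := hu P hP
      obtain ⟨c, hc, hfc⟩ := sInter_harrison hreal hwi f hfin hsub
      exact ⟨c, hc, by rw [← hfu]; exact hfc⟩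
    choose! g hg hug using hbasic
    -- compactness : finite subcover
    have hcover : s ⊆ ⋃ P ∈ s, Harrison F (g P) := by
      intro P hP
      exact Set.mem_biUnion hP (by rw [← hug P hP]; exact hPu P hP)
    obtain ⟨t, ht⟩ := hcomp.elim_finite_subcover_image
      (fun P hP => (isClopen_harrison (hg P hP)).isOpen) hcover
    obtain ⟨hts, htfin, htcov⟩ := ht
    -- rewrite as a Finset union
    obtain ⟨d, hd, hdu⟩ := biUnion_harrison hreal hwi htfin.toFinset g
      (fun P hP => hg P (hts (htfin.mem_toFinset.mp hP)))
    refine ⟨d, hd, ?_⟩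
    rw [← hdu]
    apply Set.eq_of_subset_of_subset
    · intro P hP
      have := htcov hP
      simp only [Set.mem_iUnion] at this ⊢
      obtain ⟨Q, hQ, hPQ⟩ := this
      exact ⟨Q, htfin.mem_toFinset.mpr hQ, hPQ⟩
    · intro P hP
      simp only [Set.mem_iUnion] at hP
      obtain ⟨Q, hQ, hPQ⟩ := hP
      have hQs := hts (htfin.mem_toFinset.mp hQ)
      have : P ∈ u Q := by rw [hug Q hQs]; exact hPQ
      exact hus Q hQs this

end Aux7


/-- `F` satisfies SAP iff every form `⟨1,a,b,-ab⟩` (`a,b ∈ F*`) is weakly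
isotropic. -/
theorem stmt9 (F : Type*) [Field F] (hchar : (2 : F) ≠ 0) :
    QF.IsSAP F ↔
      ∀ a b : F, a ≠ 0 → b ≠ 0 → QF.WeaklyIsotropic ![1, a, b, -(a * b)] := by
  constructor
  · intro hSAP a b ha hb
    exact forward_wi hSAP ha hb
  · intro hwi
    exact backward_sap hwi
end

section
/- Let K be a uniquely ordered formally real field of characteristic not 2. Then F = K((t)) is a SAP field. -/
open scoped BigOperators ENat Classical

namespace Stmt14Aux

variable {K : Type*} [Field K]

/-! ### Sums of squares helpers -/

theorem isSumSq_sq {R : Type*} [CommRing R] (a : R) : IsSumSq (a * a) := by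
  simpa using IsSumSq.sq_add a 0 IsSumSq.zero

theorem isSumSq_sq_mul {R : Type*} [CommRing R] (a : R) {y : R} (hy : IsSumSq y) :
    IsSumSq (a * a * y) := by
  induction hy with
  | zero => simpa using IsSumSq.zero
  | @sq_add b S pS ih =>
      have h : a * a * (b * b + S) = (a * b) * (a * b) + a * a * S := by ring
      rw [h]; exact IsSumSq.sq_add _ ih

theorem isSumSq_mul {R : Type*} [CommRing R] {x y : R} (hx : IsSumSq x) (hy : IsSumSq y) :
    IsSumSq (x * y) := by
  induction hx with
  | zero => simpa using IsSumSq.zero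
  | @sq_add a S pS ih =>
      rw [add_mul]
      exact IsSumSq.add (isSumSq_sq_mul a hy) ih

theorem isSumSq_one {R : Type*} [CommRing R] : IsSumSq (1 : R) := by
  simpa using isSumSq_sq (1 : R)

/-! ### Artin's theorem for uniquely ordered fields -/

/-- A preordering on a field. -/
def IsPre (T : Set K) : Prop :=
  (∀ x : K, x * x ∈ T) ∧ (∀ x ∈ T, ∀ y ∈ T, x + y ∈ T) ∧
    (∀ x ∈ T, ∀ y ∈ T, x * y ∈ T) ∧ (-1 : K) ∉ T

theorem maximal_total {T : Set K} (hmax : Maximal IsPre T) (a : K) :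
    a ∈ T ∨ -a ∈ T := by
  obtain ⟨⟨hsq, hadd, hmul, hneg⟩, hm⟩ := hmax
  set T' : Set K := {x | ∃ s ∈ T, ∃ u ∈ T, x = s + a * u} with hT'
  have hTT' : T ⊆ T' := fun x hx => ⟨x, hx, 0, by simpa using hsq 0, by ring⟩
  by_cases hone : (-1 : K) ∈ T'
  · -- then -a ∈ T
    obtain ⟨s, hs, u, hu, he⟩ := hone
    by_cases hu0 : u = 0
    · exact absurd (by rw [hu0, mul_zero, add_zero] at he; exact he ▸ hs) hneg
    · right
      have key : (-a : K) = (1 + s) * u * (u⁻¹ * u⁻¹) := by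
        have h1 : (1 : K) + s = -(a * u) := by linear_combination -he
        rw [h1]; field_simp
      rw [key]
      exact hmul _ (hmul _ (hadd _ (by simpa using hsq 1) _ hs) _ hu) _ (hsq u⁻¹)
  · -- T' is a preordering containing a, so a ∈ T by maximality
    left
    have hpre : IsPre T' := by
      refine ⟨fun x => ⟨x * x, hsq x, 0, by simpa using hsq 0, by ring⟩, ?_, ?_, hone⟩
      · rintro x ⟨s, hs, u, hu, rfl⟩ y ⟨s', hs', u', hu', rfl⟩
        exact ⟨s + s', hadd _ hs _ hs', u + u', hadd _ hu _ hu', by ring⟩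
      · rintro x ⟨s, hs, u, hu, rfl⟩ y ⟨s', hs', u', hu', rfl⟩
        refine ⟨s * s' + (a * a) * (u * u'),
          hadd _ (hmul _ hs _ hs') _ (hmul _ (hsq a) _ (hmul _ hu _ hu')),
          s * u' + u * s', hadd _ (hmul _ hs _ hu') _ (hmul _ hu _ hs'), by ring⟩
    have hsub : T' ⊆ T := hm hpre hTT'
    exact hsub ⟨0, by simpa using hsq 0, 1, by simpa using hsq 1, by ring⟩

theorem exists_ordering (T0 : Set K) (hT0 : IsPre T0) :
    ∃ P : QF.FieldOrdering K, T0 ⊆ P.P := by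
  have hchainub : ∀ c ⊆ {T : Set K | IsPre T}, IsChain (· ⊆ ·) c → c.Nonempty →
      ∃ ub ∈ {T : Set K | IsPre T}, ∀ s ∈ c, s ⊆ ub := by
    rintro c hc hchain ⟨t, ht⟩
    refine ⟨⋃₀ c, ⟨?_, ?_, ?_, ?_⟩, fun s hs => Set.subset_sUnion_of_mem hs⟩
    · exact fun x => ⟨t, ht, (hc ht).1 x⟩
    · rintro x ⟨t1, ht1, hx⟩ y ⟨t2, ht2, hy⟩
      rcases hchain.total ht1 ht2 with h | h
      · exact ⟨t2, ht2, (hc ht2).2.1 x (h hx) y hy⟩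
      · exact ⟨t1, ht1, (hc ht1).2.1 x hx y (h hy)⟩
    · rintro x ⟨t1, ht1, hx⟩ y ⟨t2, ht2, hy⟩
      rcases hchain.total ht1 ht2 with h | h
      · exact ⟨t2, ht2, (hc ht2).2.2.1 x (h hx) y hy⟩
      · exact ⟨t1, ht1, (hc ht1).2.2.1 x hx y (h hy)⟩
    · rintro ⟨t1, ht1, hx⟩
      exact (hc ht1).2.2.2 hx
  obtain ⟨m, hsub, hmax⟩ := zorn_subset_nonempty {T : Set K | IsPre T} hchainub T0 hT0
  obtain ⟨hsq, hadd, hmul, hneg⟩ := hmax.1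
  exact ⟨⟨m, fun x y hx hy => hadd x hx y hy, fun x y hx hy => hmul x hx y hy,
    fun x => maximal_total hmax x, hneg⟩, hsub⟩

theorem artin (hreal : ¬ IsSumSq (-1 : K)) (huniq : ∃! P : QF.FieldOrdering K, True)
    {c : K} (hc : c ≠ 0) : IsSumSq c ∨ IsSumSq (-c) := by
  by_contra hcon
  push_neg at hcon
  have key : ∀ d : K, d ≠ 0 → ¬ IsSumSq (-d) →
      ∃ P : QF.FieldOrdering K, d ∈ P.P ∧ -d ∉ P.P := by
    intro d hd hnd
    have hpre : IsPre {x : K | ∃ s, IsSumSq s ∧ ∃ u, IsSumSq u ∧ x = s + d * u} := by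
      refine ⟨fun x => ⟨x * x, isSumSq_sq x, 0, IsSumSq.zero, by ring⟩, ?_, ?_, ?_⟩
      · rintro x ⟨s, hs, u, hu, rfl⟩ y ⟨s', hs', u', hu', rfl⟩
        exact ⟨s + s', hs.add hs', u + u', hu.add hu', by ring⟩
      · rintro x ⟨s, hs, u, hu, rfl⟩ y ⟨s', hs', u', hu', rfl⟩
        exact ⟨s * s' + (d * d) * (u * u'),
          (isSumSq_mul hs hs').add (isSumSq_mul (isSumSq_sq d) (isSumSq_mul hu hu')),
          s * u' + u * s', (isSumSq_mul hs hu').add (isSumSq_mul hu hs'), by ring⟩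
      · rintro ⟨s, hs, u, hu, he⟩
        by_cases hu0 : u = 0
        · rw [hu0, mul_zero, add_zero] at he; exact hreal (he ▸ hs)
        · refine hnd ?_
          have key2 : (-d : K) = (1 + s) * u * (u⁻¹ * u⁻¹) := by
            have h1 : (1 : K) + s = -(d * u) := by linear_combination -he
            rw [h1]; field_simp
          rw [key2]
          exact isSumSq_mul (isSumSq_mul (isSumSq_one.add hs) hu) (isSumSq_sq u⁻¹)
    obtain ⟨P, hP⟩ := exists_ordering _ hpre
    have hdP : d ∈ P.P := hP ⟨0, IsSumSq.zero, 1, isSumSq_one, by ring⟩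
    refine ⟨P, hdP, fun hnegd => ?_⟩
    have h1 : (-1 : K) = (d * -d) * (d⁻¹ * d⁻¹) := by field_simp
    exact P.neg_one_notMem (h1 ▸ P.mul_mem _ _ (P.mul_mem _ _ hdP hnegd)
      (hP ⟨d⁻¹ * d⁻¹, isSumSq_sq d⁻¹, 0, IsSumSq.zero, by ring⟩))
  obtain ⟨P1, hc1, hc1'⟩ := key c hc hcon.2
  obtain ⟨P2, hc2, hc2'⟩ := key (-c) (neg_ne_zero.2 hc) (by simpa using hcon.1)
  obtain ⟨P0, -, hP0⟩ := huniq
  have hPP : P1 = P2 := (hP0 P1 trivial).trans (hP0 P2 trivial).symm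
  rw [hPP] at hc1
  exact (by simpa using hc2' : c ∉ P2.P) hc1

end Stmt14Aux

namespace Stmt14Aux

variable {K : Type*} [Field K]

/-! ### Square roots of power series with constant coefficient 1 -/

noncomputable def sqcoef (f : PowerSeries K) : ℕ → K
  | 0 => 1
  | n + 1 =>
    (PowerSeries.coeff (n + 1) f -
      ∑ k ∈ (Finset.range n).attach, sqcoef f (k.1 + 1) * sqcoef f (n - k.1)) / 2
  decreasing_by
  · have := k.2; simp only [Finset.mem_range] at this; omega
  · have := k.2; simp only [Finset.mem_range] at this; omega

theorem sqcoef_spec (h2 : (2 : K) ≠ 0) (f : PowerSeries K)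
    (hf : PowerSeries.coeff 0 f = 1) (n : ℕ) :
    ∑ p ∈ Finset.HasAntidiagonal.antidiagonal n, sqcoef f p.1 * sqcoef f p.2 = PowerSeries.coeff n f := by
  rcases n with _ | n
  · simp [sqcoef, hf]
  · rw [Finset.Nat.sum_antidiagonal_eq_sum_range_succ (fun i j => sqcoef f i * sqcoef f j)]
    rw [Finset.sum_range_succ, Finset.sum_range_succ']
    have e0 : sqcoef f 0 = 1 := by rw [sqcoef]
    simp only [Nat.succ_sub_succ, Nat.sub_self, Nat.sub_zero, e0, one_mul, mul_one]
    have hdef : sqcoef f (n + 1) =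
        (PowerSeries.coeff (n + 1) f -
          ∑ k ∈ (Finset.range n).attach, sqcoef f (k.1 + 1) * sqcoef f (n - k.1)) / 2 := by
      rw [sqcoef]
    rw [Finset.sum_attach (Finset.range n) (fun k => sqcoef f (k + 1) * sqcoef f (n - k))] at hdef
    rw [hdef]
    field_simp
    ring

theorem exists_sqrt (h2 : (2 : K) ≠ 0) (f : PowerSeries K)
    (hf : PowerSeries.coeff 0 f = 1) : ∃ g : PowerSeries K, g ^ 2 = f := by
  refine ⟨PowerSeries.mk (sqcoef f), ?_⟩
  ext n
  rw [pow_two, PowerSeries.coeff_mul]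
  simpa [PowerSeries.coeff_mk] using sqcoef_spec h2 f hf n

/-! ### Square-class decomposition in Laurent series -/

theorem laurent_struct (h2 : (2 : K) ≠ 0) (x : LaurentSeries K) (hx : x ≠ 0) :
    ∃ (c : K) (σ : LaurentSeries K), c ≠ 0 ∧
      (x = HahnSeries.C c * σ ^ 2 ∨
        x = HahnSeries.C c * HahnSeries.single (1 : ℤ) (1 : K) * σ ^ 2) := by
  set P := x.powerSeriesPart with hPdef
  set c := PowerSeries.coeff 0 P with hc
  have hc0 : c ≠ 0 := by
    rw [hc, hPdef, LaurentSeries.powerSeriesPart_coeff]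
    simpa using HahnSeries.coeff_order_eq_zero.not.mpr hx
  have hQ : PowerSeries.coeff 0 (PowerSeries.C c⁻¹ * P) = 1 := by
    simp only [PowerSeries.coeff_zero_eq_constantCoeff, map_mul, PowerSeries.constantCoeff_C]
    rw [← PowerSeries.coeff_zero_eq_constantCoeff, ← hc]
    exact inv_mul_cancel₀ hc0
  obtain ⟨g, hg⟩ := exists_sqrt h2 _ hQ
  have hP : PowerSeries.C c * g ^ 2 = P := by
    rw [hg, ← mul_assoc, ← map_mul, mul_inv_cancel₀ hc0, map_one, one_mul]
  have hx1 : (HahnSeries.single x.order 1 : LaurentSeries K) *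
      HahnSeries.ofPowerSeries ℤ K P = x := LaurentSeries.single_order_mul_powerSeriesPart x
  have hcast : HahnSeries.ofPowerSeries ℤ K P =
      HahnSeries.C c * (HahnSeries.ofPowerSeries ℤ K g) ^ 2 := by
    rw [← hP, map_mul, map_pow]
    congr 1
    exact PowerSeries.coe_C c
  rcases Int.even_or_odd x.order with ⟨k, hk⟩ | ⟨k, hk⟩
  · refine ⟨c, HahnSeries.single k 1 * HahnSeries.ofPowerSeries ℤ K g, hc0, Or.inl ?_⟩
    have hsingle : (HahnSeries.single x.order 1 : LaurentSeries K) =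
        HahnSeries.single k 1 * HahnSeries.single k 1 := by
      rw [HahnSeries.single_mul_single, mul_one, hk]
    rw [← hx1, hcast, hsingle]
    ring
  · refine ⟨c, HahnSeries.single k 1 * HahnSeries.ofPowerSeries ℤ K g, hc0, Or.inr ?_⟩
    have hsingle : (HahnSeries.single x.order 1 : LaurentSeries K) =
        HahnSeries.single (1 : ℤ) 1 * (HahnSeries.single k 1 * HahnSeries.single k 1) := by
      rw [HahnSeries.single_mul_single, mul_one, HahnSeries.single_mul_single, mul_one, hk]
      congr 1
      ring
    rw [← hx1, hcast, hsingle]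
    ring

end Stmt14Aux

namespace Stmt14Aux

variable {K : Type*} [Field K]

theorem sos_fin {c : K} (h : IsSumSq c) :
    ∃ (m : ℕ) (s : Fin (m + 1) → K), c = ∑ k, s k * s k := by
  induction h with
  | zero => exact ⟨0, ![0], by simp⟩
  | @sq_add a S pS ih =>
      obtain ⟨m, s, hs⟩ := ih
      exact ⟨m + 1, Fin.cons a s, by simp [Fin.sum_univ_succ, hs]⟩

theorem sos_to_F {c : K} (h : IsSumSq c) (σ : LaurentSeries K) :
    ∃ (m : ℕ) (u : Fin (m + 1) → LaurentSeries K),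
      HahnSeries.C c * σ ^ 2 = ∑ k, u k ^ 2 := by
  obtain ⟨m, s, hs⟩ := sos_fin h
  refine ⟨m, fun k => HahnSeries.C (s k) * σ, ?_⟩
  rw [hs, map_sum, Finset.sum_mul]
  exact Finset.sum_congr rfl fun k _ => by rw [map_mul]; ring

theorem weakly_isotropic_of_rel {F : Type*} [Field F] (d : Fin 4 → F) (i j : Fin 4)
    (hij : i ≠ j) (m : ℕ) (s : Fin (m + 1) → F)
    (h : d i * (∑ k, s k ^ 2) + d j = 0) :
    QF.WeaklyIsotropic d := by
  refine ⟨m + 1, Nat.succ_le_succ (Nat.zero_le m), ?_⟩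
  refine ⟨fun p => (if p.2 = i then s p.1 else 0) + (if p.2 = j ∧ p.1 = 0 then 1 else 0),
    ?_, ?_⟩
  · intro hv
    simpa [Ne.symm hij] using congrFun hv (0, j)
  · unfold QF.qval QF.copies
    rw [Fintype.sum_prod_type]
    have hinner : ∀ x : Fin (m + 1),
        (∑ y : Fin 4, d y * ((if y = i then s x else 0) +
          (if y = j ∧ x = 0 then 1 else 0)) ^ 2) =
        d i * s x ^ 2 + (if x = 0 then d j else 0) := by
      intro x
      have hy : ∀ y : Fin 4, d y * ((if y = i then s x else 0) +
          (if y = j ∧ x = 0 then 1 else 0)) ^ 2 =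
          (if y = i then d i * s x ^ 2 else 0) +
          (if y = j then (if x = 0 then d j else 0) else 0) := by
        intro y
        by_cases h1 : y = i <;> by_cases h2 : y = j <;> by_cases h3 : x = 0 <;>
          simp_all <;> ring
      rw [Finset.sum_congr rfl fun y _ => hy y, Finset.sum_add_distrib]
      rw [Finset.sum_ite_eq' Finset.univ i (fun _ => d i * s x ^ 2)]
      rw [Finset.sum_ite_eq' Finset.univ j (fun _ => if x = 0 then d j else 0)]
      simp
    rw [Finset.sum_congr rfl fun x _ => hinner x, Finset.sum_add_distrib,
      ← Finset.mul_sum, Finset.sum_ite_eq' Finset.univ 0 (fun _ => d j)]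
    simpa using h

end Stmt14Aux

/-- If `K` is a uniquely ordered formally real field, then `F = K((t))`
is SAP: every form `⟨1,a,b,-ab⟩` over `F` is weakly isotropic. -/
theorem stmt14 (K : Type*) [Field K] (hchar : (2 : K) ≠ 0)
    (hreal : ¬ IsSumSq (-1 : K))
    (huniq : ∃! P : QF.FieldOrdering K, True) :
    ∀ a b : LaurentSeries K, a ≠ 0 → b ≠ 0 →
      QF.WeaklyIsotropic ![1, a, b, -(a * b)] := by
  intro a b ha hb
  set d : Fin 4 → LaurentSeries K := ![1, a, b, -(a * b)] with hd
  have d0 : d 0 = 1 := rfl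
  have d1 : d 1 = a := rfl
  have d2 : d 2 = b := rfl
  have d3 : d 3 = -(a * b) := rfl
  obtain ⟨ca, σa, hca, hEa⟩ := Stmt14Aux.laurent_struct hchar a ha
  obtain ⟨cb, σb, hcb, hEb⟩ := Stmt14Aux.laurent_struct hchar b hb
  rcases hEa with hA | hA
  · -- a is (sum-of-squares unit) times square class of ca
    rcases Stmt14Aux.artin hreal huniq hca with h | h
    · obtain ⟨m, u, hu⟩ := Stmt14Aux.sos_to_F h σa
      refine Stmt14Aux.weakly_isotropic_of_rel d 2 3 (by decide) m u ?_
      rw [d2, d3, ← hu, ← hA]; ring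
    · obtain ⟨m, u, hu⟩ := Stmt14Aux.sos_to_F h σa
      have hna : -a = ∑ k, u k ^ 2 := by rw [hA, ← hu, map_neg]; ring
      refine Stmt14Aux.weakly_isotropic_of_rel d 0 1 (by decide) m u ?_
      rw [d0, d1, ← hna]; ring
  · rcases hEb with hB | hB
    · rcases Stmt14Aux.artin hreal huniq hcb with h | h
      · obtain ⟨m, u, hu⟩ := Stmt14Aux.sos_to_F h σb
        refine Stmt14Aux.weakly_isotropic_of_rel d 1 3 (by decide) m u ?_
        rw [d1, d3, ← hu, ← hB]; ring
      · obtain ⟨m, u, hu⟩ := Stmt14Aux.sos_to_F h σb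
        have hnb : -b = ∑ k, u k ^ 2 := by rw [hB, ← hu, map_neg]; ring
        refine Stmt14Aux.weakly_isotropic_of_rel d 0 2 (by decide) m u ?_
        rw [d0, d2, ← hnb]; ring
    · -- both odd: a*b is square class of ca*cb
      have hab : a * b = HahnSeries.C (ca * cb) *
          (HahnSeries.single (1 : ℤ) (1 : K) * σa * σb) ^ 2 := by
        rw [hA, hB, map_mul]; ring
      rcases Stmt14Aux.artin hreal huniq (mul_ne_zero hca hcb) with h | h
      · obtain ⟨m, u, hu⟩ := Stmt14Aux.sos_to_F h
          (HahnSeries.single (1 : ℤ) (1 : K) * σa * σb)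
        have habs : a * b = ∑ k, u k ^ 2 := by rw [hab, hu]
        refine Stmt14Aux.weakly_isotropic_of_rel d 0 3 (by decide) m u ?_
        rw [d0, d3, ← habs]; ring
      · obtain ⟨m, u, hu⟩ := Stmt14Aux.sos_to_F h
          (HahnSeries.single (1 : ℤ) (1 : K) * σa * σb)
        have habs : -(a * b) = ∑ k, u k ^ 2 := by
          rw [hab, ← hu, map_neg]; ring
        refine Stmt14Aux.weakly_isotropic_of_rel d 1 2 (by decide) m
          (fun k => u k * a⁻¹) ?_
        have hsum : (∑ k, (u k * a⁻¹) ^ 2) = -(a * b) * (a⁻¹ * a⁻¹) := by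
          rw [habs, Finset.sum_mul]
          exact Finset.sum_congr rfl fun k _ => by ring
        rw [d1, d2, hsum]
        field_simp
        ring
end

section
/- Let F be a field of characteristic not 2 with u(F) = 2^{n+1} such that every torsion (n+2)-fold Pfister form over F is hyperbolic, and let π be an anisotropic (n+1)-fold Pfister form such that π ⊥ -xπ is torsion for all x ∈ F*. Then xπ ≅ π for every x ∈ F*, i.e., π is universal up to isometry under scaling. -/
open scoped BigOperators ENat Classical

namespace QF

variable {F : Type*} [Field F]
variable {ι κ ι' κ' : Type*} [Fintype ι] [Fintype κ] [Fintype ι'] [Fintype κ']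

lemma qval_zero (d : ι → F) : qval d (0 : ι → F) = 0 := by simp [qval]

lemma qval_smul (c : F) (d : ι → F) (v : ι → F) :
    qval (fun i => c * d i) v = c * qval d v := by
  simp [qval, Finset.mul_sum, mul_assoc]

lemma qval_sumForm_s16 (d : ι → F) (e : κ → F) (w : ι ⊕ κ → F) :
    qval (sumForm d e) w = qval d (w ∘ Sum.inl) + qval e (w ∘ Sum.inr) := by
  simp [qval, sumForm, Fintype.sum_sum_type, Function.comp]

lemma isometric_refl (d : ι → F) : Isometric d d :=
  ⟨LinearEquiv.refl F _, fun _ => rfl⟩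

lemma isometric_symm {d : ι → F} {e : κ → F} (h : Isometric d e) : Isometric e d := by
  obtain ⟨f, hf⟩ := h
  exact ⟨f.symm, fun v => by
    have := hf (f.symm v); rw [f.apply_symm_apply] at this; exact this.symm⟩

lemma isometric_trans {d : ι → F} {e : κ → F} {g : ι' → F}
    (h1 : Isometric d e) (h2 : Isometric e g) : Isometric d g := by
  obtain ⟨f1, hf1⟩ := h1; obtain ⟨f2, hf2⟩ := h2
  exact ⟨f1.trans f2, fun v => by
    simp only [LinearEquiv.trans_apply]; rw [hf2, hf1]⟩

lemma isometric_comp (e : ι ≃ κ) (d : κ → F) : Isometric (fun i => d (e i)) d := by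
  refine ⟨LinearEquiv.funCongrLeft F F e.symm, fun v => ?_⟩
  show qval d (fun k => v (e.symm k)) = qval (fun i => d (e i)) v
  unfold qval
  refine (Fintype.sum_equiv e _ _ fun i => ?_).symm
  simp

lemma isometric_smul (c : F) {d : ι → F} {e : κ → F} (h : Isometric d e) :
    Isometric (fun i => c * d i) (fun k => c * e k) := by
  obtain ⟨f, hf⟩ := h
  exact ⟨f, fun v => by rw [qval_smul, qval_smul, hf]⟩

lemma isometric_sq_smul (s : F) (hs : s ≠ 0) (d : ι → F) :
    Isometric (fun i => s ^ 2 * d i) d := by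
  refine ⟨LinearEquiv.smulOfNeZero F (ι → F) s hs, fun v => ?_⟩
  unfold qval
  refine Finset.sum_congr rfl fun i _ => ?_
  simp only [LinearEquiv.smulOfNeZero_apply, Pi.smul_apply, Units.smul_def,
    Units.val_mk0, smul_eq_mul]
  ring

lemma isometric_sumCongr {d : ι → F} {d' : ι' → F} {e : κ → F} {e' : κ' → F}
    (h1 : Isometric d d') (h2 : Isometric e e') :
    Isometric (sumForm d e) (sumForm d' e') := by
  obtain ⟨f, hf⟩ := h1; obtain ⟨g, hg⟩ := h2
  refine ⟨(LinearEquiv.sumArrowLequivProdArrow ι κ F F).trans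
    ((f.prodCongr g).trans (LinearEquiv.sumArrowLequivProdArrow ι' κ' F F).symm), fun v => ?_⟩
  rw [qval_sumForm_s16, qval_sumForm_s16]
  have hl : ((((LinearEquiv.sumArrowLequivProdArrow ι κ F F).trans
      ((f.prodCongr g).trans (LinearEquiv.sumArrowLequivProdArrow ι' κ' F F).symm)) v) ∘ Sum.inl)
      = f (v ∘ Sum.inl) := by
    funext a
    simp [LinearEquiv.sumArrowLequivProdArrow, Equiv.sumArrowEquivProdArrow,
      LinearEquiv.prodCongr_apply, Function.comp]
  have hr : ((((LinearEquiv.sumArrowLequivProdArrow ι κ F F).trans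
      ((f.prodCongr g).trans (LinearEquiv.sumArrowLequivProdArrow ι' κ' F F).symm)) v) ∘ Sum.inr)
      = g (v ∘ Sum.inr) := by
    funext a
    simp [LinearEquiv.sumArrowLequivProdArrow, Equiv.sumArrowEquivProdArrow,
      LinearEquiv.prodCongr_apply, Function.comp]
  rw [hl, hr, hf, hg]

lemma isotropic_of_isometric {d : ι → F} {e : κ → F} (h : Isometric d e)
    (hd : Isotropic d) : Isotropic e := by
  obtain ⟨f, hf⟩ := h; obtain ⟨v, hv, hq⟩ := hd
  exact ⟨f v, by simpa using hv, by rw [hf, hq]⟩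

lemma eq_zero_of_qval {d : ι → F} (han : Anisotropic d) {y : ι → F}
    (h : qval d y = 0) : y = 0 := by
  by_contra hy; exact han ⟨y, hy, h⟩

lemma isotropic_sumForm_left {d : ι → F} (e : κ → F) (hd : Isotropic d) :
    Isotropic (sumForm d e) := by
  obtain ⟨v, hv, hq⟩ := hd
  refine ⟨Sum.elim v 0, fun h0 => hv (funext fun i => congrFun h0 (Sum.inl i)), ?_⟩
  rw [qval_sumForm_s16]
  have h1 : (Sum.elim v (0 : κ → F)) ∘ Sum.inl = v := rfl
  have h2 : (Sum.elim v (0 : κ → F)) ∘ Sum.inr = (0 : κ → F) := rfl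
  rw [h1, h2, hq, qval_zero, add_zero]

lemma torsion_comp (e : ι ≃ κ) (d : κ → F) (ht : Torsion d) :
    Torsion (fun i => d (e i)) := by
  obtain ⟨k, hk, m, hm⟩ := ht
  refine ⟨k, hk, m, ?_⟩
  have h1 : Isometric (copies k (fun i => d (e i))) (copies k d) := by
    have h := isometric_comp (Equiv.prodCongr (Equiv.refl (Fin k)) e) (copies k d)
    have heq : (fun p => copies k d ((Equiv.prodCongr (Equiv.refl (Fin k)) e) p))
        = copies k (fun i => d (e i)) := by
      funext p; rfl
    rwa [heq] at h
  exact isometric_trans h1 hm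

lemma card_le_uInv (d : ι → F) (han : Anisotropic d) (ht : Torsion d) :
    ((Fintype.card ι : ℕ) : ℕ∞) ≤ uInv F := by
  classical
  let e : ι ≃ Fin (Fintype.card ι) := Fintype.equivFin ι
  have h1 : Anisotropic (fun j => d (e.symm j)) := fun hiso =>
    han (isotropic_of_isometric (isometric_comp e.symm d) hiso)
  have h2 : Torsion (fun j => d (e.symm j)) := torsion_comp e.symm d ht
  exact le_sSup ⟨Fintype.card ι, fun j => d (e.symm j), h1, h2, rfl⟩

/-- Splitting `Finset (Fin (ℓ+1))` according to membership of `0`. -/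
noncomputable def finsetSuccEquiv (ℓ : ℕ) : Finset (Fin (ℓ + 1)) ≃ (Finset (Fin ℓ) ⊕ Finset (Fin ℓ)) where
  toFun S := if (0 : Fin (ℓ + 1)) ∈ S
    then Sum.inr (S.preimage Fin.succ (Fin.succ_injective ℓ).injOn)
    else Sum.inl (S.preimage Fin.succ (Fin.succ_injective ℓ).injOn)
  invFun T := Sum.elim (fun T => T.map ⟨Fin.succ, Fin.succ_injective ℓ⟩)
    (fun T => insert 0 (T.map ⟨Fin.succ, Fin.succ_injective ℓ⟩)) T
  left_inv S := by
    by_cases h0 : (0 : Fin (ℓ + 1)) ∈ S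
    · simp only [h0, if_true, Sum.elim_inr]
      ext x
      refine Fin.cases ?_ (fun y => ?_) x
      · simpa using h0
      · simp [Finset.mem_preimage, Fin.succ_ne_zero]
    · simp only [h0, if_false, Sum.elim_inl]
      ext x
      refine Fin.cases ?_ (fun y => ?_) x
      · simp [Fin.succ_ne_zero, h0]
      · simp [Finset.mem_preimage, Fin.succ_ne_zero]
  right_inv T := by
    rcases T with T | T
    · have h0 : (0 : Fin (ℓ + 1)) ∉ T.map ⟨Fin.succ, Fin.succ_injective ℓ⟩ := by
        simp only [Finset.mem_map, Function.Embedding.coeFn_mk]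
        rintro ⟨y, -, h⟩; exact Fin.succ_ne_zero y h
      simp only [Sum.elim_inl, h0, if_false, Sum.inl.injEq]
      ext y
      simp [Finset.mem_preimage]
    · have h0 : (0 : Fin (ℓ + 1)) ∈ insert 0 (T.map ⟨Fin.succ, Fin.succ_injective ℓ⟩) :=
        Finset.mem_insert_self _ _
      simp only [Sum.elim_inr, h0, if_true, Sum.inr.injEq]
      ext y
      simp [Finset.mem_preimage, Fin.succ_ne_zero]

lemma pfister_comp_symm (ℓ : ℕ) (a : Fin (ℓ + 1) → F)
    (p : Finset (Fin ℓ) ⊕ Finset (Fin ℓ)) :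
    pfister a ((finsetSuccEquiv ℓ).symm p) =
      sumForm (pfister (fun i => a i.succ))
        (fun T => a 0 * pfister (fun i => a i.succ) T) p := by
  rcases p with T | T
  · show pfister a (T.map ⟨Fin.succ, Fin.succ_injective ℓ⟩) = pfister (fun i => a i.succ) T
    unfold pfister
    rw [Finset.prod_map]
    rfl
  · show pfister a (insert 0 (T.map ⟨Fin.succ, Fin.succ_injective ℓ⟩))
      = a 0 * pfister (fun i => a i.succ) T
    have h0 : (0 : Fin (ℓ + 1)) ∉ T.map ⟨Fin.succ, Fin.succ_injective ℓ⟩ := by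
      simp only [Finset.mem_map, Function.Embedding.coeFn_mk]
      rintro ⟨y, -, h⟩; exact Fin.succ_ne_zero y h
    unfold pfister
    rw [Finset.prod_insert h0, Finset.prod_map]
    rfl

lemma pfister_succ_isometric (ℓ : ℕ) (a : Fin (ℓ + 1) → F) :
    Isometric (sumForm (pfister (fun i => a i.succ))
      (fun T => a 0 * pfister (fun i => a i.succ) T)) (pfister a) := by
  have h := isometric_comp (finsetSuccEquiv ℓ).symm (pfister a)
  have heq : (fun p => pfister a ((finsetSuccEquiv ℓ).symm p))
      = sumForm (pfister (fun i => a i.succ))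
        (fun T => a 0 * pfister (fun i => a i.succ) T) :=
    funext (pfister_comp_symm ℓ a)
  rwa [heq] at h

/-- The linear map realizing `⟨1,t⟩ ⊗ ρ ≅ (1+t)·(⟨1,t⟩ ⊗ ρ)`. -/
def twistMapA (σ : Type*) (t : F) : ((σ ⊕ σ) → F) →ₗ[F] ((σ ⊕ σ) → F) where
  toFun w := Sum.elim (fun i => w (Sum.inl i) - t * w (Sum.inr i))
    (fun i => w (Sum.inl i) + w (Sum.inr i))
  map_add' u v := by funext p; rcases p with i | i <;> simp <;> ring
  map_smul' c v := by funext p; rcases p with i | i <;> simp <;> ring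

def twistMapB (σ : Type*) (t s : F) : ((σ ⊕ σ) → F) →ₗ[F] ((σ ⊕ σ) → F) where
  toFun w := Sum.elim (fun i => s⁻¹ * (w (Sum.inl i) + t * w (Sum.inr i)))
    (fun i => s⁻¹ * (w (Sum.inr i) - w (Sum.inl i)))
  map_add' u v := by funext p; rcases p with i | i <;> simp <;> ring
  map_smul' c v := by funext p; rcases p with i | i <;> simp <;> ring

def twistEquiv (σ : Type*) (t s : F) (hs : s ≠ 0) (hst : s = 1 + t) :
    ((σ ⊕ σ) → F) ≃ₗ[F] ((σ ⊕ σ) → F) :=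
  LinearEquiv.ofLinear (twistMapA σ t) (twistMapB σ t s)
    (by
      ext w p
      rcases p with i | i <;>
        simp [twistMapA, twistMapB] <;>
        · field_simp
          rw [hst]; ring)
    (by
      ext w p
      rcases p with i | i <;>
        simp [twistMapA, twistMapB] <;>
        · field_simp
          rw [hst]; ring)

lemma twist_isometric {σ : Type*} [Fintype σ] (ρ : σ → F) (t s : F)
    (hs : s ≠ 0) (hst : s = 1 + t) :
    Isometric (sumForm (fun i => s * ρ i) (fun i => s * t * ρ i))
      (sumForm ρ (fun i => t * ρ i)) := by
  refine ⟨twistEquiv σ t s hs hst, fun w => ?_⟩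
  rw [qval_sumForm_s16, qval_sumForm_s16]
  have hl : ((twistEquiv σ t s hs hst) w) ∘ Sum.inl
      = fun i => w (Sum.inl i) - t * w (Sum.inr i) := rfl
  have hr : ((twistEquiv σ t s hs hst) w) ∘ Sum.inr
      = fun i => w (Sum.inl i) + w (Sum.inr i) := rfl
  rw [hl, hr]
  unfold qval
  rw [← Finset.sum_add_distrib, ← Finset.sum_add_distrib]
  refine Finset.sum_congr rfl fun i _ => ?_
  have h1 : (w ∘ Sum.inl) i = w (Sum.inl i) := rfl
  have h2 : (w ∘ Sum.inr) i = w (Sum.inr i) := rfl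
  rw [h1, h2, hst]; ring

lemma pfister_round : ∀ (ℓ : ℕ) (a : Fin ℓ → F), Anisotropic (pfister a) →
    ∀ w : Finset (Fin ℓ) → F, w ≠ 0 →
    Isometric (fun S => qval (pfister a) w * pfister a S) (pfister a) := by
  intro ℓ
  induction ℓ with
  | zero =>
    intro a _ w hw
    have huniv : (Finset.univ : Finset (Finset (Fin 0))) = {∅} := by
      ext S
      simp only [Finset.mem_univ, Finset.mem_singleton, true_iff]
      exact Finset.eq_empty_of_isEmpty S
    have hq : qval (pfister a) w = w ∅ ^ 2 := by
      unfold qval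
      rw [huniv, Finset.sum_singleton]
      show pfister a ∅ * w ∅ ^ 2 = w ∅ ^ 2
      unfold pfister
      rw [Finset.prod_empty, one_mul]
    have hwd : w ∅ ≠ 0 := fun h => hw (funext fun S => by
      rw [Finset.eq_empty_of_isEmpty S]; exact h)
    rw [hq]
    exact isometric_sq_smul (w ∅) hwd (pfister a)
  | succ ℓ IH =>
    intro a haniso w hw
    set ρ : Finset (Fin ℓ) → F := pfister (fun i => a i.succ) with hρdef
    set t : F := a 0 with htdef
    have hφπ := pfister_succ_isometric ℓ a
    set φ : (Finset (Fin ℓ) ⊕ Finset (Fin ℓ)) → F := sumForm ρ (fun S => t * ρ S) with hφdef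
    have hφa : Anisotropic φ := fun hiso => haniso (isotropic_of_isometric hφπ hiso)
    have hρa : Anisotropic ρ := fun hiso => hφa (isotropic_sumForm_left _ hiso)
    obtain ⟨f, hf⟩ := hφπ
    set v : (Finset (Fin ℓ) ⊕ Finset (Fin ℓ)) → F := f.symm w with hvdef
    have hv : v ≠ 0 := by
      intro h
      apply hw
      have := congrArg f h
      rwa [f.apply_symm_apply, map_zero] at this
    set c : F := qval (pfister a) w with hcdef
    have hcv : qval φ v = c := by
      rw [hcdef, ← hf v, hvdef, f.apply_symm_apply]
    have hc0 : c ≠ 0 := by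
      intro h
      exact haniso ⟨w, hw, by rw [← hcdef, h]⟩
    have hφπ' : Isometric φ (pfister a) := pfister_succ_isometric ℓ a
    suffices hkey : Isometric (fun p => c * φ p) φ by
      have h1 : Isometric (fun p => c * φ p) (fun S => c * pfister a S) :=
        isometric_smul c hφπ'
      exact isometric_trans (isometric_trans (isometric_symm h1) hkey) hφπ'
    set u : Finset (Fin ℓ) → F := v ∘ Sum.inl with hudef
    set z : Finset (Fin ℓ) → F := v ∘ Sum.inr with hzdef
    set b : F := qval ρ u with hbdef
    set d : F := qval ρ z with hddef
    have hsplit : c = b + t * d := by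
      rw [← hcv, hφdef, qval_sumForm_s16, qval_smul]
    have ht0 : t ≠ 0 := by
      intro h
      apply hφa
      refine ⟨Sum.elim (0 : Finset (Fin ℓ) → F) (fun _ : Finset (Fin ℓ) => (1 : F)), ?_, ?_⟩
      · intro h0
        have := congrFun h0 (Sum.inr ∅)
        simp at this
      · rw [hφdef, qval_sumForm_s16]
        have h1 : (Sum.elim (0 : Finset (Fin ℓ) → F) (fun _ : Finset (Fin ℓ) => (1 : F))) ∘ Sum.inl
            = (0 : Finset (Fin ℓ) → F) := rfl
        rw [h1, qval_zero, zero_add]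
        unfold qval
        refine Finset.sum_eq_zero fun S _ => ?_
        simp [h]
    by_cases hd : d = 0
    · -- right part is zero
      have hz0 : z = 0 := eq_zero_of_qval hρa (by rw [← hddef]; exact hd)
      have hu0 : u ≠ 0 := by
        intro h
        apply hv
        funext p
        rcases p with i | i
        · exact congrFun h i
        · exact congrFun hz0 i
      have hcb : c = b := by rw [hsplit, hd]; ring
      have hbρ : Isometric (fun S => b * ρ S) ρ := by
        have := IH (fun i => a i.succ) hρa u hu0
        rwa [← hρdef, ← hbdef] at this
      have hcρ : Isometric (fun S => c * ρ S) ρ := by rwa [hcb]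
      have heq : (fun p => c * φ p)
          = sumForm (fun S => c * ρ S) (fun S => t * (c * ρ S)) := by
        funext p; rcases p with S | S
        · rfl
        · show c * (t * ρ S) = t * (c * ρ S); ring
      rw [heq]
      exact isometric_sumCongr hcρ (isometric_smul t hcρ)
    · -- d ≠ 0
      have hz0 : z ≠ 0 := by
        intro h; apply hd; rw [hddef, h, qval_zero]
      have hdρ : Isometric (fun S => d * ρ S) ρ := by
        have := IH (fun i => a i.succ) hρa z hz0
        rwa [← hρdef, ← hddef] at this
      set e : F := t * d with hedef
      have he0 : e ≠ 0 := mul_ne_zero ht0 hd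
      have hψφ : Isometric (sumForm ρ (fun S => e * ρ S)) φ := by
        refine isometric_sumCongr (isometric_refl ρ) ?_
        have h1 : (fun S => e * ρ S) = (fun S => t * (d * ρ S)) := by
          funext S; rw [hedef]; ring
        rw [h1]
        exact isometric_smul t hdρ
      by_cases hb : b = 0
      · have hce : c = e := by rw [hsplit, hb, hedef]; ring
        have hseψ : Isometric (fun p => e * sumForm ρ (fun S => e * ρ S) p)
            (sumForm ρ (fun S => e * ρ S)) := by
          have heq1 : (fun p => e * sumForm ρ (fun S => e * ρ S) p)
              = sumForm (fun S => e * ρ S) (fun S => e ^ 2 * ρ S) := by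
            funext p; rcases p with S | S
            · rfl
            · show e * (e * ρ S) = e ^ 2 * ρ S; ring
          rw [heq1]
          have h2 : Isometric (sumForm (fun S => e * ρ S) (fun S => e ^ 2 * ρ S))
              (sumForm (fun S => e * ρ S) ρ) :=
            isometric_sumCongr (isometric_refl _) (isometric_sq_smul e he0 ρ)
          refine isometric_trans h2 ?_
          have h3 := isometric_comp (Equiv.sumComm (Finset (Fin ℓ)) (Finset (Fin ℓ)))
            (sumForm ρ (fun S => e * ρ S))
          have heq2 : (fun p => sumForm ρ (fun S => e * ρ S)
              ((Equiv.sumComm (Finset (Fin ℓ)) (Finset (Fin ℓ))) p))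
              = sumForm (fun S => e * ρ S) ρ := by
            funext p; rcases p with S | S <;> rfl
          rwa [heq2] at h3
        have h4 : Isometric (fun p => c * φ p)
            (fun p => c * sumForm ρ (fun S => e * ρ S) p) :=
          isometric_symm (isometric_smul c hψφ)
        refine isometric_trans h4 ?_
        rw [hce]
        exact isometric_trans hseψ hψφ
      · -- b ≠ 0
        have hu0 : u ≠ 0 := by
          intro h; apply hb; rw [hbdef, h, qval_zero]
        have hbρ : Isometric (fun S => b * ρ S) ρ := by
          have := IH (fun i => a i.succ) hρa u hu0
          rwa [← hρdef, ← hbdef] at this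
        set t' : F := e * b⁻¹ with ht'def
        set s : F := c * b⁻¹ with hsdef
        have hs0 : s ≠ 0 := mul_ne_zero hc0 (inv_ne_zero hb)
        have hst : s = 1 + t' := by
          rw [hsdef, ht'def, hsplit, hedef]
          field_simp
        set χ : (Finset (Fin ℓ) ⊕ Finset (Fin ℓ)) → F := sumForm ρ (fun S => t' * ρ S)
          with hχdef
        have hbt' : b * t' = e := by rw [ht'def]; field_simp
        have hbχψ : Isometric (fun p => b * χ p) (sumForm ρ (fun S => e * ρ S)) := by
          have heq1 : (fun p => b * χ p)
              = sumForm (fun S => b * ρ S) (fun S => e * ρ S) := by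
            funext p; rcases p with S | S
            · rfl
            · show b * (t' * ρ S) = e * ρ S
              rw [← hbt']; ring
          rw [heq1]
          exact isometric_sumCongr hbρ (isometric_refl _)
        have hbχχ : Isometric (fun p => b * χ p) χ := by
          have heq1 : (fun p => b * χ p)
              = sumForm (fun S => b * ρ S) (fun S => t' * (b * ρ S)) := by
            funext p; rcases p with S | S
            · rfl
            · show b * (t' * ρ S) = t' * (b * ρ S); ring
          rw [heq1]
          exact isometric_sumCongr hbρ (isometric_smul t' hbρ)
        have hsχ : Isometric (fun p => s * χ p) χ := by
          have heq1 : (fun p => s * χ p)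
              = sumForm (fun S => s * ρ S) (fun S => s * t' * ρ S) := by
            funext p; rcases p with S | S
            · rfl
            · show s * (t' * ρ S) = s * t' * ρ S; ring
          rw [heq1]
          exact twist_isometric ρ t' s hs0 hst
        have hφχ : Isometric φ χ := by
          refine isometric_trans (isometric_symm hψφ) ?_
          exact isometric_trans (isometric_symm hbχψ) hbχχ
        have hcs : c = s * b := by rw [hsdef]; field_simp
        have h5 : Isometric (fun p => c * φ p) (fun p => c * χ p) :=
          isometric_smul c hφχ
        have heq2 : (fun p => c * χ p) = (fun p => s * (b * χ p)) := by
          funext p; rw [hcs]; ring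
        have h6 : Isometric (fun p => s * (b * χ p)) (fun p => s * χ p) :=
          isometric_smul s hbχχ
        refine isometric_trans h5 ?_
        rw [heq2]
        exact isometric_trans (isometric_trans h6 hsχ) (isometric_symm hφχ)

end QF

/-- If `u(F) = 2^(n+1)`, every torsion `(n+2)`-fold Pfister form is
hyperbolic, and `π` is an anisotropic `(n+1)`-fold Pfister form with `π ⊥ -xπ` torsion
for all `x ∈ F*`, then `xπ ≅ π` for all `x ∈ F*`. -/
theorem stmt16 (F : Type*) [Field F] (hchar : (2 : F) ≠ 0) (n : ℕ)
    (hu : QF.uInv F = ((2 ^ (n + 1) : ℕ) : ℕ∞))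
    (htor : ∀ b : Fin (n + 2) → F, (∀ i, b i ≠ 0) →
      QF.Torsion (QF.pfister b) → QF.Hyperbolic (QF.pfister b))
    (a : Fin (n + 1) → F) (ha : ∀ i, a i ≠ 0)
    (haniso : QF.Anisotropic (QF.pfister a))
    (hπtor : ∀ x : F, x ≠ 0 →
      QF.Torsion (QF.sumForm (QF.pfister a) (fun S => -x * QF.pfister a S))) :
    ∀ x : F, x ≠ 0 → QF.Isometric (fun S => x * QF.pfister a S) (QF.pfister a) := by
  intro x hx
  have htors := hπtor x hx
  have hiso : QF.Isotropic (QF.sumForm (QF.pfister a) (fun S => -x * QF.pfister a S)) := by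
    by_contra han
    have hcard := QF.card_le_uInv _ han htors
    rw [hu] at hcard
    have hc : Fintype.card (Finset (Fin (n + 1)) ⊕ Finset (Fin (n + 1))) = 2 ^ (n + 2) := by
      rw [Fintype.card_sum, Fintype.card_finset, Fintype.card_fin]
      rw [pow_succ 2 (n + 1)]; ring
    rw [hc] at hcard
    have h2 : (2 : ℕ) ^ (n + 2) ≤ 2 ^ (n + 1) := by exact_mod_cast hcard
    have h3 : (2 : ℕ) ^ (n + 1) < 2 ^ (n + 2) :=
      Nat.pow_lt_pow_right one_lt_two (by omega)
    omega
  obtain ⟨v, hv, hq⟩ := hiso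
  set u : Finset (Fin (n + 1)) → F := v ∘ Sum.inl with hudef
  set z : Finset (Fin (n + 1)) → F := v ∘ Sum.inr with hzdef
  have hq' : QF.qval (QF.pfister a) u + (-x) * QF.qval (QF.pfister a) z = 0 := by
    rw [← hq, QF.qval_sumForm_s16, QF.qval_smul]
  have hz : z ≠ 0 := by
    intro h
    have hz0 : QF.qval (QF.pfister a) z = 0 := by rw [h, QF.qval_zero]
    have hu0 : QF.qval (QF.pfister a) u = 0 := by
      rw [hz0, mul_zero, add_zero] at hq'; exact hq'
    have hueq := QF.eq_zero_of_qval haniso hu0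
    apply hv
    funext p
    rcases p with i | i
    · exact congrFun hueq i
    · exact congrFun h i
  have hd0 : QF.qval (QF.pfister a) z ≠ 0 := fun h => hz (QF.eq_zero_of_qval haniso h)
  have hbd : QF.qval (QF.pfister a) u = x * QF.qval (QF.pfister a) z := by
    linear_combination hq'
  have hb0 : QF.qval (QF.pfister a) u ≠ 0 := by
    rw [hbd]; exact mul_ne_zero hx hd0
  have hu : u ≠ 0 := by
    intro h; apply hb0; rw [h, QF.qval_zero]
  have hround_b := QF.pfister_round (n + 1) a haniso u hu
  have hround_d := QF.pfister_round (n + 1) a haniso z hz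
  set b : F := QF.qval (QF.pfister a) u with hbdef
  set d : F := QF.qval (QF.pfister a) z with hddef
  have heq1 : (fun S => x * QF.pfister a S)
      = (fun S => (d⁻¹) ^ 2 * (b * (d * QF.pfister a S))) := by
    funext S
    rw [hbd]
    field_simp
  rw [heq1]
  have h1 : QF.Isometric (fun S => (d⁻¹) ^ 2 * (b * (d * QF.pfister a S)))
      (fun S => b * (d * QF.pfister a S)) :=
    QF.isometric_sq_smul d⁻¹ (inv_ne_zero hd0) _
  have h2 : QF.Isometric (fun S => b * (d * QF.pfister a S))
      (fun S => b * QF.pfister a S) :=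
    QF.isometric_smul b hround_d
  exact QF.isometric_trans h1 (QF.isometric_trans h2 hround_b)
end
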